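/- arXiv:1508.03907 — 14 statements merged into one kernel-verified Lean document; each statement's English description precedes it below -/
import Mathlib

section
/- Let C be a nonempty closed convex subset of a real Hilbert space H, let u ∈ H, and let (x_k) be a sequence in H such that every weak limit point of (x_k) belongs to C and ‖x_k − u‖ ≤ ‖u − P_C(u)‖ for all k. Then (x_k) converges strongly to P_C(u). -/
open RealInnerProductSpace Filter Topology

/-- Weak Bolzano–Weierstrass in a Hilbert space: a bounded sequence has a weakly
convergent subsequence. -/
theorem weak_bw_aux {H : Type*} [NormedAddCommGroup H] [InnerProductSpace ℝ H] [CompleteSpace H]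
    (x : ℕ → H) (R : ℝ) (hR : ∀ k, ‖x k‖ ≤ R) :
    ∃ (p : H) (φ : ℕ → ℕ), StrictMono φ ∧
      ∀ v : H, Tendsto (fun n => ⟪x (φ n), v⟫) atTop (𝓝 ⟪p, v⟫) := by
  have hR0 : 0 ≤ R := le_trans (norm_nonneg _) (hR 0)
  -- Step 1: diagonal extraction via compactness of a product of intervals
  set S : Set (ℕ → ℝ) := Set.univ.pi fun m => Set.Icc (-(R * ‖x m‖)) (R * ‖x m‖) with hS
  have hScomp : IsCompact S := isCompact_univ_pi fun m => isCompact_Icc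
  have hF : ∀ k, (fun m => (⟪x k, x m⟫ : ℝ)) ∈ S := by
    intro k
    intro m _
    have h1 : |(⟪x k, x m⟫ : ℝ)| ≤ ‖x k‖ * ‖x m‖ := abs_real_inner_le_norm _ _
    have h2 : ‖x k‖ * ‖x m‖ ≤ R * ‖x m‖ :=
      mul_le_mul_of_nonneg_right (hR k) (norm_nonneg _)
    have := abs_le.mp (h1.trans h2)
    exact ⟨this.1, this.2⟩
  obtain ⟨g, -, φ, hφ, hg⟩ := hScomp.tendsto_subseq hF
  have hgm : ∀ m, Tendsto (fun n => (⟪x (φ n), x m⟫ : ℝ)) atTop (𝓝 (g m)) := by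
    intro m
    exact (tendsto_pi_nhds.mp hg) m
  -- Step 2: the set of vectors against which the subsequence converges is a submodule
  set W : Submodule ℝ H :=
    { carrier := {v | ∃ L : ℝ, Tendsto (fun n => (⟪x (φ n), v⟫ : ℝ)) atTop (𝓝 L)}
      add_mem' := by
        rintro a b ⟨L1, h1⟩ ⟨L2, h2⟩
        exact ⟨L1 + L2, by simpa [inner_add_right] using h1.add h2⟩
      zero_mem' := ⟨0, by simpa using (tendsto_const_nhds : Tendsto (fun _ : ℕ => (0:ℝ)) _ _)⟩
      smul_mem' := by
        rintro c v ⟨L, h⟩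
        exact ⟨c * L, by simpa [real_inner_smul_right] using h.const_mul c⟩ } with hW
  set K : Submodule ℝ H := (Submodule.span ℝ (Set.range x)).topologicalClosure with hKdef
  haveI : CompleteSpace K :=
    (Submodule.isClosed_topologicalClosure _).completeSpace_coe
  have hxK : ∀ k, x k ∈ K := fun k =>
    Submodule.le_topologicalClosure _ (Submodule.subset_span ⟨k, rfl⟩)
  have hspanW : Submodule.span ℝ (Set.range x) ≤ W := by
    rw [Submodule.span_le]
    rintro v ⟨m, rfl⟩
    exact ⟨g m, hgm m⟩
  -- Step 3: convergence against every element of K, by density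
  have hK : ∀ v ∈ K, ∃ L : ℝ, Tendsto (fun n => (⟪x (φ n), v⟫ : ℝ)) atTop (𝓝 L) := by
    intro v hv
    have hc : CauchySeq (fun n => (⟪x (φ n), v⟫ : ℝ)) := by
      rw [Metric.cauchySeq_iff]
      intro ε hε
      have hv' : v ∈ closure ((Submodule.span ℝ (Set.range x) : Submodule ℝ H) : Set H) := hv
      obtain ⟨s, hs, hsv⟩ := Metric.mem_closure_iff.mp hv' (ε / (4 * (R + 1)))
        (by positivity)
      obtain ⟨L, hL⟩ := hspanW hs
      have hLc := hL.cauchySeq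
      rw [Metric.cauchySeq_iff] at hLc
      obtain ⟨N, hN⟩ := hLc (ε / 2) (by positivity)
      refine ⟨N, fun n hn m hm => ?_⟩
      have key : ∀ a : ℕ, dist (⟪x (φ a), v⟫ : ℝ) (⟪x (φ a), s⟫ : ℝ) < ε / 4 := by
        intro a
        rw [Real.dist_eq, ← inner_sub_right]
        calc |(⟪x (φ a), v - s⟫ : ℝ)| ≤ ‖x (φ a)‖ * ‖v - s‖ := abs_real_inner_le_norm _ _
          _ ≤ R * ‖v - s‖ := mul_le_mul_of_nonneg_right (hR _) (norm_nonneg _)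
          _ < (R + 1) * (ε / (4 * (R + 1))) := by
              apply mul_lt_mul' (by linarith)
              · simpa [dist_eq_norm] using hsv
              · exact norm_nonneg _
              · positivity
          _ = ε / 4 := by field_simp
      have h2 := hN n hn m hm
      calc dist (⟪x (φ n), v⟫ : ℝ) (⟪x (φ m), v⟫ : ℝ)
          ≤ dist (⟪x (φ n), v⟫ : ℝ) (⟪x (φ n), s⟫ : ℝ) +
            dist (⟪x (φ n), s⟫ : ℝ) (⟪x (φ m), s⟫ : ℝ) +
            dist (⟪x (φ m), s⟫ : ℝ) (⟪x (φ m), v⟫ : ℝ) := dist_triangle4 _ _ _ _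
        _ < ε / 4 + ε / 2 + ε / 4 := by
            have := key n
            have := key m
            have := dist_comm (⟪x (φ m), s⟫ : ℝ) (⟪x (φ m), v⟫ : ℝ)
            gcongr <;> first
              | exact key n
              | exact h2
              | (rw [dist_comm]; exact key m)
        _ = ε := by ring
    exact cauchySeq_tendsto_of_complete hc
  -- Step 4: convergence against every element of H, via orthogonal projection
  have hcauchy : ∀ v : H, ∃ L : ℝ, Tendsto (fun n => (⟪x (φ n), v⟫ : ℝ)) atTop (𝓝 L) := by
    intro v
    set w : H := (K.orthogonalProjectionOnto v : H) with hw
    obtain ⟨L, hL⟩ := hK w (K.orthogonalProjectionOnto v).2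
    refine ⟨L, hL.congr fun n => ?_⟩
    have h0 : (⟪x (φ n), v - w⟫ : ℝ) = 0 :=
      Submodule.inner_right_of_mem_orthogonal (hxK _)
        (Submodule.sub_starProjection_mem_orthogonal (K := K) v)
    have := inner_sub_right (𝕜 := ℝ) (x (φ n)) v w
    rw [h0] at this
    linarith [this.symm]
  choose f hf using hcauchy
  -- Step 5: f is a bounded linear functional; obtain p by Riesz representation
  have hadd : ∀ v w : H, f (v + w) = f v + f w := fun v w =>
    tendsto_nhds_unique (hf (v + w)) (by simpa [inner_add_right] using (hf v).add (hf w))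
  have hsmul : ∀ (c : ℝ) (v : H), f (c • v) = c * f v := fun c v =>
    tendsto_nhds_unique (hf (c • v))
      (by simpa [real_inner_smul_right] using (hf v).const_mul c)
  have hbound : ∀ v : H, |f v| ≤ R * ‖v‖ := by
    intro v
    have h1 : Tendsto (fun n => |(⟪x (φ n), v⟫ : ℝ)|) atTop (𝓝 |f v|) := (hf v).abs
    refine le_of_tendsto h1 (Eventually.of_forall fun n => ?_)
    exact (abs_real_inner_le_norm _ _).trans
      (mul_le_mul_of_nonneg_right (hR _) (norm_nonneg _))
  let Flin : H →ₗ[ℝ] ℝ :=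
    { toFun := f
      map_add' := hadd
      map_smul' := hsmul }
  let Fc : H →L[ℝ] ℝ := Flin.mkContinuous R fun v => by
    simpa [Flin, Real.norm_eq_abs] using hbound v
  refine ⟨(InnerProductSpace.toDual ℝ H).symm Fc, φ, hφ, fun v => ?_⟩
  have hip : (⟪(InnerProductSpace.toDual ℝ H).symm Fc, v⟫ : ℝ) = Fc v :=
    InnerProductSpace.toDual_symm_apply
  rw [hip]
  exact hf v

/-- If every weak limit point of `(x_k)` lies in `C` and `‖x_k − u‖ ≤ ‖u − P_C u‖` for all `k`,
then `x_k → P_C u` strongly. -/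
theorem stmt_2 {H : Type*} [NormedAddCommGroup H] [InnerProductSpace ℝ H] [CompleteSpace H]
    (C : Set H) (hne : C.Nonempty) (hcl : IsClosed C) (hconv : Convex ℝ C)
    (P : H → H)
    (hP : ∀ x : H, P x ∈ C ∧ ∀ y ∈ C, ‖x - P x‖ ≤ ‖x - y‖)
    (u : H) (x : ℕ → H)
    (hweak : ∀ p : H, (∃ φ : ℕ → ℕ, StrictMono φ ∧
        ∀ v : H, Tendsto (fun n => ⟪x (φ n), v⟫) atTop (𝓝 ⟪p, v⟫)) → p ∈ C)
    (hbd : ∀ k, ‖x k - u‖ ≤ ‖u - P u‖) :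
    Tendsto x atTop (𝓝 (P u)) := by
  set d : ℝ := ‖u - P u‖ with hd
  obtain ⟨hPuC, hPmin⟩ := hP u
  have hd0 : 0 ≤ d := norm_nonneg _
  apply tendsto_of_subseq_tendsto
  intro ns hns
  obtain ⟨ms, hms, hmono⟩ := strictMono_subseq_of_tendsto_atTop hns
  -- the subsequence
  set z : ℕ → H := fun n => x (ns (ms n)) with hz
  have hzb : ∀ n, ‖z n - u‖ ≤ d := fun n => hbd _
  have hzR : ∀ n, ‖z n‖ ≤ d + ‖u‖ := by
    intro n
    calc ‖z n‖ = ‖z n - u + u‖ := by simp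
      _ ≤ ‖z n - u‖ + ‖u‖ := norm_add_le _ _
      _ ≤ d + ‖u‖ := by linarith [hzb n]
  obtain ⟨p, φ, hφ, hw⟩ := weak_bw_aux z (d + ‖u‖) hzR
  -- p is a weak limit point of x, hence p ∈ C
  have hpC : p ∈ C := by
    refine hweak p ⟨fun n => ns (ms (φ n)), hmono.comp hφ, fun v => ?_⟩
    exact hw v
  -- ‖p - u‖ ≤ d
  have hinner : Tendsto (fun n => (⟪z (φ n) - u, p - u⟫ : ℝ)) atTop
      (𝓝 (⟪p - u, p - u⟫ : ℝ)) := by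
    have h1 := (hw (p - u)).sub (tendsto_const_nhds (x := (⟪u, p - u⟫ : ℝ)))
    have h2 : ∀ n, (⟪z (φ n) - u, p - u⟫ : ℝ) = ⟪z (φ n), p - u⟫ - ⟪u, p - u⟫ := fun n =>
      inner_sub_left _ _ _
    have h3 : (⟪p - u, p - u⟫ : ℝ) = ⟪p, p - u⟫ - ⟪u, p - u⟫ := inner_sub_left _ _ _
    rw [h3]
    exact h1.congr fun n => (h2 n).symm
  have hle : ‖p - u‖ ^ 2 ≤ d * ‖p - u‖ := by
    have h4 : (⟪p - u, p - u⟫ : ℝ) = ‖p - u‖ ^ 2 := real_inner_self_eq_norm_sq _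
    rw [← h4]
    refine le_of_tendsto hinner (Eventually.of_forall fun n => ?_)
    calc (⟪z (φ n) - u, p - u⟫ : ℝ) ≤ ‖z (φ n) - u‖ * ‖p - u‖ := real_inner_le_norm _ _
      _ ≤ d * ‖p - u‖ := mul_le_mul_of_nonneg_right (hzb _) (norm_nonneg _)
  have hpd : ‖p - u‖ ≤ d := by
    rcases eq_or_lt_of_le (norm_nonneg (p - u)) with h0 | h0
    · rw [← h0]; exact hd0
    · have h5 : ‖p - u‖ * ‖p - u‖ ≤ d * ‖p - u‖ := by nlinarith [hle]
      exact le_of_mul_le_mul_right h5 h0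
  have hdp : d ≤ ‖p - u‖ := by
    have := hPmin p hpC
    rwa [norm_sub_rev u p] at this
  have heq : ‖p - u‖ = d := le_antisymm hpd hdp
  -- uniqueness of the projection: p = P u
  have hpPu : p = P u := by
    have hmC : (1 / 2 : ℝ) • p + (1 / 2 : ℝ) • P u ∈ C :=
      hconv hpC hPuC (by norm_num) (by norm_num) (by norm_num)
    have hmd : d ≤ ‖u - ((1 / 2 : ℝ) • p + (1 / 2 : ℝ) • P u)‖ := hPmin _ hmC
    set a : H := u - p with ha
    set b : H := u - P u with hb
    have hab : u - ((1 / 2 : ℝ) • p + (1 / 2 : ℝ) • P u) = (1 / 2 : ℝ) • (a + b) := by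
      rw [ha, hb]; module
    have hna : ‖a‖ = d := by rw [ha, norm_sub_rev]; exact heq
    have hnb : ‖b‖ = d := rfl
    have hsum : (2 : ℝ) * d ≤ ‖a + b‖ := by
      have : ‖u - ((1 / 2 : ℝ) • p + (1 / 2 : ℝ) • P u)‖ = (1 / 2 : ℝ) * ‖a + b‖ := by
        rw [hab, norm_smul]; simp [Real.norm_eq_abs]
      rw [this] at hmd
      linarith
    have hpar := parallelogram_law_with_norm ℝ a b
    have hdiff : ‖a - b‖ * ‖a - b‖ ≤ 0 := by nlinarith [hpar, hsum, hna, hnb, norm_nonneg (a + b)]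
    have : a - b = 0 := by
      rw [← norm_eq_zero]
      exact le_antisymm (by nlinarith [norm_nonneg (a - b)]) (norm_nonneg _)
    have hab2 : a = b := sub_eq_zero.mp this
    have : u - p = u - P u := hab2
    exact (sub_right_injective this)
  -- strong convergence of the subsequence to P u
  refine ⟨ms ∘ φ, ?_⟩
  rw [tendsto_iff_norm_sub_tendsto_zero]
  have hbound : ∀ n, ‖z (φ n) - p‖ ^ 2 ≤ 2 * d ^ 2 + 2 * ⟪z (φ n) - u, u - p⟫ := by
    intro n
    have hexp : ‖z (φ n) - p‖ ^ 2 = ‖z (φ n) - u‖ ^ 2 + 2 * ⟪z (φ n) - u, u - p⟫ + ‖u - p‖ ^ 2 := by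
      have : z (φ n) - p = (z (φ n) - u) + (u - p) := by abel
      rw [this, norm_add_sq_real]
    have h6 : ‖z (φ n) - u‖ ^ 2 ≤ d ^ 2 := by
      have := hzb (φ n)
      nlinarith [norm_nonneg (z (φ n) - u)]
    have h7 : ‖u - p‖ ^ 2 = d ^ 2 := by rw [norm_sub_rev, heq]
    rw [hexp, h7]
    linarith
  have hlim : Tendsto (fun n => 2 * d ^ 2 + 2 * (⟪z (φ n) - u, u - p⟫ : ℝ)) atTop (𝓝 0) := by
    have h1 : Tendsto (fun n => (⟪z (φ n) - u, u - p⟫ : ℝ)) atTop (𝓝 (⟪p - u, u - p⟫ : ℝ)) := by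
      have h2 := (hw (u - p)).sub (tendsto_const_nhds (x := (⟪u, u - p⟫ : ℝ)))
      have h3 : ∀ n, (⟪z (φ n) - u, u - p⟫ : ℝ) = ⟪z (φ n), u - p⟫ - ⟪u, u - p⟫ := fun n =>
        inner_sub_left _ _ _
      have h4 : (⟪p - u, u - p⟫ : ℝ) = ⟪p, u - p⟫ - ⟪u, u - p⟫ := inner_sub_left _ _ _
      rw [h4]
      exact h2.congr fun n => (h3 n).symm
    have h5 : (⟪p - u, u - p⟫ : ℝ) = -(d ^ 2) := by
      have : (⟪p - u, u - p⟫ : ℝ) = -(⟪u - p, u - p⟫ : ℝ) := by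
        rw [← inner_neg_left]; congr 1; abel
      rw [this, real_inner_self_eq_norm_sq, norm_sub_rev, heq]
    rw [h5] at h1
    have := (h1.const_mul 2).const_add (2 * d ^ 2)
    simpa using this
  have hsq : Tendsto (fun n => ‖z (φ n) - p‖ ^ 2) atTop (𝓝 0) :=
    squeeze_zero (fun n => sq_nonneg _) hbound hlim
  have hnorm : Tendsto (fun n => ‖z (φ n) - p‖) atTop (𝓝 0) := by
    have hsqrt := (Real.continuous_sqrt.tendsto 0).comp hsq
    simp only [Function.comp_def, Real.sqrt_eq_zero', Real.sqrt_zero] at hsqrt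
    refine hsqrt.congr fun n => ?_
    rw [Real.sqrt_sq (norm_nonneg _)]
  rw [← hpPu]
  exact hnorm
end

section
/- Let T : C → C be an (α, β, γ, δ)-symmetric generalized hybrid mapping on a nonempty closed convex subset C of a real Hilbert space, with Fix(T) nonempty, satisfying α + 2β + γ ≥ 0, α + β > 0, and δ ≥ 0. Then T is quasi-nonexpansive, i.e., ‖Tx − p‖ ≤ ‖x − p‖ for all x ∈ C and p ∈ Fix(T). -/
/-- A symmetric generalized hybrid mapping with `α + 2β + γ ≥ 0`, `α + β > 0`, `δ ≥ 0`
and a fixed point is quasi-nonexpansive. -/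
theorem stmt_4 {H : Type*} [NormedAddCommGroup H] [InnerProductSpace ℝ H] [CompleteSpace H]
    (C : Set H) (hne : C.Nonempty) (hcl : IsClosed C) (hconv : Convex ℝ C)
    (T : H → H) (hT : ∀ x ∈ C, T x ∈ C)
    (α β γ δ : ℝ)
    (hhyb : ∀ x ∈ C, ∀ y ∈ C,
      α * ‖T x - T y‖ ^ 2 + β * (‖x - T y‖ ^ 2 + ‖y - T x‖ ^ 2) + γ * ‖x - y‖ ^ 2
        + δ * (‖x - T x‖ ^ 2 + ‖y - T y‖ ^ 2) ≤ 0)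
    (h1 : α + 2 * β + γ ≥ 0) (h2 : α + β > 0) (h3 : δ ≥ 0)
    (hfix : ({x ∈ C | T x = x}).Nonempty) :
    ∀ x ∈ C, ∀ p ∈ {x ∈ C | T x = x}, ‖T x - p‖ ≤ ‖x - p‖ := by
  intro x hx p hp
  obtain ⟨hpC, hpf⟩ := hp
  have key := hhyb x hx p hpC
  rw [hpf] at key
  have h4 : (0:ℝ) ≤ ‖x - T x‖ ^ 2 := sq_nonneg _
  have h5 : (0:ℝ) ≤ ‖T x - p‖ := norm_nonneg _
  have h6 : (0:ℝ) ≤ ‖x - p‖ := norm_nonneg _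
  have hpp : ‖p - p‖ = 0 := by simp
  rw [hpp] at key
  have hsym : ‖p - T x‖ = ‖T x - p‖ := norm_sub_rev _ _
  rw [hsym] at key
  by_contra hc
  push_neg at hc
  have h7 : ‖x - p‖ ^ 2 < ‖T x - p‖ ^ 2 := by nlinarith
  nlinarith [mul_nonneg h3 h4, mul_pos h2 (sub_pos.mpr h7)]
end

section
/- Let T : C → C be an (α, β, γ, δ)-symmetric generalized hybrid mapping on a nonempty closed convex subset C of a real Hilbert space with Fix(T) ≠ ∅, satisfying α + 2β + γ ≥ 0, α + β > 0, and δ ≥ 0. Then I − T is demiclosed at 0: if (x_k) ⊆ C converges weakly to x̄ and x_k − T x_k → 0 strongly, then x̄ ∈ Fix(T). -/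
open RealInnerProductSpace Filter Topology

lemma exp3 {H : Type*} [NormedAddCommGroup H] [InnerProductSpace ℝ H] (d u e : H) :
    ‖d + u - e‖ ^ 2 = ‖d‖ ^ 2 + ‖u‖ ^ 2 + ‖e‖ ^ 2 + 2 * ⟪d, u⟫ - 2 * ⟪d, e⟫ - 2 * ⟪u, e⟫ := by
  simp only [← real_inner_self_eq_norm_sq, inner_sub_left, inner_sub_right, inner_add_left,
    inner_add_right, real_inner_comm e d, real_inner_comm u d, real_inner_comm e u]
  ring

/-- For a symmetric generalized hybrid mapping with `α + 2β + γ ≥ 0`, `α + β > 0`, `δ ≥ 0`,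
`I − T` is demiclosed at `0`. -/
theorem stmt_5 {H : Type*} [NormedAddCommGroup H] [InnerProductSpace ℝ H] [CompleteSpace H]
    (C : Set H) (hne : C.Nonempty) (hcl : IsClosed C) (hconv : Convex ℝ C)
    (T : H → H) (hT : ∀ x ∈ C, T x ∈ C)
    (α β γ δ : ℝ)
    (hhyb : ∀ x ∈ C, ∀ y ∈ C,
      α * ‖T x - T y‖ ^ 2 + β * (‖x - T y‖ ^ 2 + ‖y - T x‖ ^ 2) + γ * ‖x - y‖ ^ 2
        + δ * (‖x - T x‖ ^ 2 + ‖y - T y‖ ^ 2) ≤ 0)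
    (h1 : α + 2 * β + γ ≥ 0) (h2 : α + β > 0) (h3 : δ ≥ 0)
    (hfix : ({x ∈ C | T x = x}).Nonempty)
    (x : ℕ → H) (hxC : ∀ k, x k ∈ C) (xbar : H)
    (hweak : ∀ v : H, Tendsto (fun k => ⟪x k, v⟫) atTop (𝓝 ⟪xbar, v⟫))
    (hstrong : Tendsto (fun k => ‖x k - T (x k)‖) atTop (𝓝 0)) :
    xbar ∈ C ∧ T xbar = xbar := by
  -- Step 1: xbar ∈ C by weak closedness of closed convex sets
  have hxbarC : xbar ∈ C := by
    by_contra hxn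
    obtain ⟨f, c, hfc, hfb⟩ := geometric_hahn_banach_point_closed hconv hcl hxn
    obtain ⟨v, hv⟩ := (InnerProductSpace.toDual ℝ H).surjective f
    have hfy : ∀ y : H, f y = ⟪v, y⟫ := by
      intro y; rw [← hv]; rfl
    have hlim : Tendsto (fun k => ⟪x k, v⟫) atTop (𝓝 ⟪xbar, v⟫) := hweak v
    have hge : ∀ k, c ≤ ⟪x k, v⟫ := fun k => by
      rw [real_inner_comm, ← hfy]; exact (hfb _ (hxC k)).le
    have : c ≤ ⟪xbar, v⟫ := ge_of_tendsto' hlim hge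
    rw [real_inner_comm, ← hfy] at this
    exact absurd hfc (not_lt.2 this)
  -- Step 2: boundedness of (x k)
  obtain ⟨M, hM⟩ : ∃ M : ℝ, ∀ k, ‖x k‖ ≤ M := by
    have hb : ∀ v : H, ∃ Cv : ℝ, ∀ k, ‖(innerSL ℝ (x k)) v‖ ≤ Cv := by
      intro v
      have := (hweak v).norm.bddAbove_range
      obtain ⟨Cv, hCv⟩ := this
      exact ⟨Cv, fun k => hCv ⟨k, rfl⟩⟩
    obtain ⟨M, hM⟩ := banach_steinhaus hb
    exact ⟨M, fun k => by rw [← innerSL_apply_norm ℝ (x k)]; exact hM k⟩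
  set u : H := xbar - T xbar with hu
  -- Step 3: key inequality
  have key : ∀ k, (α + β + δ) * ‖u‖ ^ 2 ≤
      2 * (α + β) * ⟪x k - xbar, x k - T (x k)⟫ - 2 * (α + β) * ⟪x k - xbar, u⟫
        + 2 * α * ⟪u, x k - T (x k)⟫ := by
    intro k
    have hk := hhyb (x k) (hxC k) xbar hxbarC
    set d : H := x k - xbar with hd
    set e : H := x k - T (x k) with he
    have e1 : T (x k) - T xbar = d + u - e := by rw [hd, hu, he]; abel
    have e2 : x k - T xbar = d + u := by rw [hd, hu]; abel
    have e3 : xbar - T (x k) = e - d := by rw [hd, he]; abel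
    have e5 : xbar - T xbar = u := rfl
    rw [e1, e2, e3, e5, exp3 d u e, norm_add_sq_real d u, norm_sub_sq_real e d,
      real_inner_comm e d] at hk
    have n1 : 0 ≤ (α + 2 * β + γ) * ‖d‖ ^ 2 := mul_nonneg h1 (by positivity)
    have n2 : 0 ≤ (α + β + δ) * ‖e‖ ^ 2 := mul_nonneg (by linarith) (by positivity)
    rw [real_inner_comm e d]
    ring_nf at hk n1 n2 ⊢
    linarith [hk, n1, n2]
  -- Step 4: the right-hand side tends to 0
  have lim1 : Tendsto (fun k => ⟪x k - xbar, u⟫) atTop (𝓝 0) := by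
    have := (hweak u).sub_const ⟪xbar, u⟫
    rw [sub_self] at this
    simpa [inner_sub_left] using this
  have lim2 : Tendsto (fun k => ⟪u, x k - T (x k)⟫) atTop (𝓝 0) := by
    have h := hstrong.const_mul ‖u‖
    rw [mul_zero] at h
    apply squeeze_zero_norm (fun k => ?_) h
    rw [Real.norm_eq_abs]
    exact abs_real_inner_le_norm u _
  have lim3 : Tendsto (fun k => ⟪x k - xbar, x k - T (x k)⟫) atTop (𝓝 0) := by
    apply squeeze_zero_norm (a := fun k => (M + ‖xbar‖) * ‖x k - T (x k)‖)
    · intro k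
      calc ‖⟪x k - xbar, x k - T (x k)⟫‖ ≤ ‖x k - xbar‖ * ‖x k - T (x k)‖ :=
            abs_real_inner_le_norm _ _
        _ ≤ (M + ‖xbar‖) * ‖x k - T (x k)‖ := by
            apply mul_le_mul_of_nonneg_right _ (norm_nonneg _)
            exact (norm_sub_le _ _).trans (by linarith [hM k])
    · simpa using hstrong.const_mul (M + ‖xbar‖)
  have limtot : Tendsto (fun k => 2 * (α + β) * ⟪x k - xbar, x k - T (x k)⟫
      - 2 * (α + β) * ⟪x k - xbar, u⟫ + 2 * α * ⟪u, x k - T (x k)⟫) atTop (𝓝 0) := by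
    have := ((lim3.const_mul (2 * (α + β))).sub (lim1.const_mul (2 * (α + β)))).add
      (lim2.const_mul (2 * α))
    simpa using this
  have hle : (α + β + δ) * ‖u‖ ^ 2 ≤ 0 := ge_of_tendsto' limtot key
  have hu0 : u = 0 := by
    have : ‖u‖ ^ 2 ≤ 0 := by
      by_contra hc
      push_neg at hc
      nlinarith
    have : ‖u‖ = 0 := by nlinarith [norm_nonneg u, sq_nonneg ‖u‖]
    exact norm_eq_zero.mp this
  exact ⟨hxbarC, (sub_eq_zero.mp hu0).symm⟩
end

section
/- Let C be a nonempty closed convex subset of a real Hilbert space, f : C × C → ℝ an equilibrium bifunction with f(x,·) convex, lower semicontinuous, and subdifferentiable on C for each x, let ρ > 0, and let x ∈ C. If y = argmin{ f(x, z) + (ρ/2)‖z − x‖² : z ∈ C }, then for every w ∈ ∂₂f(x, x) one has ‖y − x‖ ≤ (2/ρ)‖w‖. -/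
open RealInnerProductSpace

/-- If `y` minimizes `f(x,·) + (ρ/2)‖·−x‖²` over `C`, then `‖y − x‖ ≤ (2/ρ)‖w‖`
for every `w ∈ ∂₂ f(x, x)`. -/
theorem stmt_6 {H : Type*} [NormedAddCommGroup H] [InnerProductSpace ℝ H] [CompleteSpace H]
    (C : Set H) (hne : C.Nonempty) (hcl : IsClosed C) (hconv : Convex ℝ C)
    (f : H → H → ℝ) (hf0 : ∀ x ∈ C, f x x = 0)
    (hconvf : ∀ x ∈ C, ConvexOn ℝ C (f x))
    (hlsc : ∀ x ∈ C, LowerSemicontinuousOn (f x) C)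
    (hsubdiff : ∀ x ∈ C, ∀ u ∈ C, ∃ w : H, ∀ v ∈ C, f x v ≥ f x u + ⟪w, v - u⟫)
    (ρ : ℝ) (hρ : 0 < ρ) (x : H) (hx : x ∈ C)
    (y : H) (hyC : y ∈ C)
    (hymin : ∀ z ∈ C, f x y + ρ / 2 * ‖y - x‖ ^ 2 ≤ f x z + ρ / 2 * ‖z - x‖ ^ 2)
    (w : H) (hw : ∀ v ∈ C, f x v ≥ f x x + ⟪w, v - x⟫) :
    ‖y - x‖ ≤ 2 / ρ * ‖w‖ := by
  have h1 := hymin x hx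
  rw [hf0 x hx] at h1
  simp only [sub_self, norm_zero] at h1
  have h2 := hw y hyC
  rw [hf0 x hx, zero_add] at h2
  have h3 : ⟪w, y - x⟫ + ρ / 2 * ‖y - x‖ ^ 2 ≤ 0 := by nlinarith
  have h4 : -(‖w‖ * ‖y - x‖) ≤ ⟪w, y - x⟫ := by
    have := abs_real_inner_le_norm w (y - x)
    cases' abs_le.mp this with hl hr
    linarith
  have h5 : ρ / 2 * ‖y - x‖ ^ 2 ≤ ‖w‖ * ‖y - x‖ := by nlinarith
  rcases eq_or_lt_of_le (norm_nonneg (y - x)) with h | h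
  · rw [← h]; positivity
  · rw [div_mul_eq_mul_div, le_div_iff₀ hρ]
    nlinarith
end

section
/- Let f satisfy f(x,x)=0, joint weak continuity on Ω×Ω (where Ω is an open convex set containing C), and f(x,·) convex, lower semicontinuous, and subdifferentiable on C for each x ∈ C. Let (x_k) ⊆ C be bounded and ρ > 0, and define y_k = argmin{ f(x_k, y) + (ρ/2)‖y − x_k‖² : y ∈ C }. Then (y_k) is bounded. -/
open RealInnerProductSpace Filter Topology

private lemma weak_cpt {H : Type*} [NormedAddCommGroup H] [InnerProductSpace ℝ H]
    [CompleteSpace H] (a : ℕ → H) (R : ℝ) (hR : ∀ n, ‖a n‖ ≤ R) :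
    ∃ (z : H) (φ : ℕ → ℕ), StrictMono φ ∧
      ∀ v : H, Tendsto (fun n => ⟪a (φ n), v⟫) atTop (𝓝 ⟪z, v⟫) := by
  have hR0 : (0:ℝ) ≤ R := le_trans (norm_nonneg _) (hR 0)
  set K : Submodule ℝ H := (Submodule.span ℝ (Set.range a)).topologicalClosure with hK
  haveI : CompleteSpace K := (Submodule.isClosed_topologicalClosure _).completeSpace_coe
  have haK : ∀ n, a n ∈ K :=
    fun n => Submodule.le_topologicalClosure _ (Submodule.subset_span (Set.mem_range_self n))
  -- separability
  have hsep : TopologicalSpace.IsSeparable (K : Set H) :=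
    (Set.countable_range a).isSeparable.span.closure
  obtain ⟨c, hc_count, hc_dense⟩ := hsep
  have hc_ne : c.Nonempty := by
    rcases Set.eq_empty_or_nonempty c with h | h
    · exfalso
      have := hc_dense (haK 0)
      rw [h, closure_empty] at this
      exact this
    · exact h
  obtain ⟨d, hd⟩ := Set.Countable.exists_eq_range hc_count hc_ne
  have hd_dense : (K : Set H) ⊆ closure (Set.range d) := hd ▸ hc_dense
  -- compactness in product space
  set s : Set (ℕ → ℝ) := Set.univ.pi (fun i => Set.Icc (-(R * ‖d i‖)) (R * ‖d i‖)) with hs_def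
  have hs : IsCompact s := isCompact_univ_pi fun i => isCompact_Icc
  set F : ℕ → (ℕ → ℝ) := fun n i => ⟪a n, d i⟫ with hF
  have hFs : ∀ n, F n ∈ s := by
    intro n i _
    have h1 : |⟪a n, d i⟫| ≤ ‖a n‖ * ‖d i‖ := abs_real_inner_le_norm _ _
    have h2 : ‖a n‖ * ‖d i‖ ≤ R * ‖d i‖ :=
      mul_le_mul_of_nonneg_right (hR n) (norm_nonneg _)
    exact abs_le.mp (h1.trans h2)
  obtain ⟨L, _, φ, hφ, hL⟩ := hs.isSeqCompact hFs
  have hpt : ∀ i, Tendsto (fun n => ⟪a (φ n), d i⟫) atTop (𝓝 (L i)) := by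
    intro i
    exact (tendsto_pi_nhds.mp hL) i
  -- projection
  have key : ∀ (n : ℕ) (v : H), ⟪a n, v⟫ = ⟪a n, ((K.orthogonalProjectionOnto v : K) : H)⟫ := by
    intro n v
    have h0 : ⟪a n, v - ((K.orthogonalProjectionOnto v : K) : H)⟫ = 0 :=
      Submodule.sub_starProjection_mem_orthogonal (K := K) v _ (haK n)
    rw [inner_sub_right] at h0
    linarith
  -- Cauchy
  have hcauchy : ∀ v : H, CauchySeq (fun n => ⟪a (φ n), v⟫) := by
    intro v
    rw [Metric.cauchySeq_iff]
    intro ε hε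
    set w : H := ((K.orthogonalProjectionOnto v : K) : H) with hw
    have hwK : w ∈ (K : Set H) := (K.orthogonalProjectionOnto v).2
    have hε4 : 0 < ε / (4 * (R + 1)) := by positivity
    obtain ⟨b, hb, hdist⟩ := Metric.mem_closure_iff.mp (hd_dense hwK) _ hε4
    obtain ⟨i, rfl⟩ := hb
    obtain ⟨N, hN⟩ := (Metric.cauchySeq_iff.mp (hpt i).cauchySeq) (ε / 2) (by positivity)
    refine ⟨N, fun m hm n hn => ?_⟩
    have est : ∀ j : ℕ, |⟪a (φ j), w⟫ - ⟪a (φ j), d i⟫| ≤ ε / 4 := by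
      intro j
      have := abs_real_inner_le_norm (a (φ j)) (w - d i)
      rw [inner_sub_right] at this
      have h2 : ‖a (φ j)‖ * ‖w - d i‖ ≤ (R + 1) * (ε / (4 * (R + 1))) := by
        apply mul_le_mul (by linarith [hR (φ j)]) _ (norm_nonneg _) (by linarith)
        rw [← dist_eq_norm]
        exact le_of_lt hdist
      have h3 : (R + 1) * (ε / (4 * (R + 1))) = ε / 4 := by
        field_simp
      linarith
    have hmv : ⟪a (φ m), v⟫ = ⟪a (φ m), w⟫ := key _ _
    have hnv : ⟪a (φ n), v⟫ = ⟪a (φ n), w⟫ := key _ _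
    have hFdist := hN m hm n hn
    rw [Real.dist_eq] at hFdist ⊢
    rw [hmv, hnv]
    have e1 := est m
    have e2 := est n
    have : |⟪a (φ m), w⟫ - ⟪a (φ n), w⟫| ≤
        |⟪a (φ m), w⟫ - ⟪a (φ m), d i⟫| + |⟪a (φ m), d i⟫ - ⟪a (φ n), d i⟫|
          + |⟪a (φ n), d i⟫ - ⟪a (φ n), w⟫| := by
      have := abs_sub_le (⟪a (φ m), w⟫) (⟪a (φ m), d i⟫) (⟪a (φ n), w⟫)
      have h2 := abs_sub_le (⟪a (φ m), d i⟫) (⟪a (φ n), d i⟫) (⟪a (φ n), w⟫)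
      linarith
    rw [abs_sub_comm (⟪a (φ n), d i⟫)] at this
    have hFmn : |F (φ m) i - F (φ n) i| < ε / 2 := hFdist
    calc |⟪a (φ m), w⟫ - ⟪a (φ n), w⟫| ≤ _ := this
      _ < ε := by simp only [hF] at hFmn; linarith
  -- limit functional
  have hlim : ∀ v : H, ∃ l : ℝ, Tendsto (fun n => ⟪a (φ n), v⟫) atTop (𝓝 l) :=
    fun v => cauchySeq_tendsto_of_complete (hcauchy v)
  choose g hg using hlim
  have gadd : ∀ v u : H, g (v + u) = g v + g u := by
    intro v u
    refine tendsto_nhds_unique ?_ ((hg v).add (hg u))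
    simpa only [inner_add_right] using hg (v + u)
  have gsmul : ∀ (r : ℝ) (v : H), g (r • v) = r * g v := by
    intro r v
    refine tendsto_nhds_unique ?_ ((hg v).const_mul r)
    simpa only [real_inner_smul_right] using hg (r • v)
  have gbound : ∀ v : H, ‖g v‖ ≤ R * ‖v‖ := by
    intro v
    have : ∀ n, |⟪a (φ n), v⟫| ≤ R * ‖v‖ := fun n =>
      (abs_real_inner_le_norm _ _).trans
        (mul_le_mul_of_nonneg_right (hR (φ n)) (norm_nonneg _))
    have habs : Tendsto (fun n => |⟪a (φ n), v⟫|) atTop (𝓝 |g v|) := (hg v).abs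
    exact le_of_tendsto habs (Eventually.of_forall this)
  set glin : H →ₗ[ℝ] ℝ :=
    { toFun := g, map_add' := gadd, map_smul' := gsmul } with hglin
  set G : H →L[ℝ] ℝ := glin.mkContinuous R gbound with hG
  refine ⟨(InnerProductSpace.toDual ℝ H).symm G, φ, hφ, fun v => ?_⟩
  have : ⟪(InnerProductSpace.toDual ℝ H).symm G, v⟫ = G v := by
    rw [← InnerProductSpace.toDual_apply_apply]
    simp
  rw [this]
  exact hg v

/-- If `(x_k) ⊆ C` is bounded and `y_k = argmin { f(x_k, y) + (ρ/2)‖y − x_k‖² : y ∈ C }`,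
then `(y_k)` is bounded. -/
theorem stmt_7 {H : Type*} [NormedAddCommGroup H] [InnerProductSpace ℝ H] [CompleteSpace H]
    (C Ω : Set H) (hne : C.Nonempty) (hcl : IsClosed C) (hconv : Convex ℝ C)
    (hΩopen : IsOpen Ω) (hΩconv : Convex ℝ Ω) (hCΩ : C ⊆ Ω)
    (f : H → H → ℝ) (hf0 : ∀ x ∈ C, f x x = 0)
    (hwc : ∀ x ∈ Ω, ∀ y ∈ Ω, ∀ (xk yk : ℕ → H), (∀ k, xk k ∈ Ω) → (∀ k, yk k ∈ Ω) →
      (∀ v : H, Tendsto (fun k => ⟪xk k, v⟫) atTop (𝓝 ⟪x, v⟫)) →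
      (∀ v : H, Tendsto (fun k => ⟪yk k, v⟫) atTop (𝓝 ⟪y, v⟫)) →
      Tendsto (fun k => f (xk k) (yk k)) atTop (𝓝 (f x y)))
    (hconvf : ∀ x ∈ C, ConvexOn ℝ C (f x))
    (hlsc : ∀ x ∈ C, LowerSemicontinuousOn (f x) C)
    (hsubdiff : ∀ x ∈ C, ∀ u ∈ C, ∃ w : H, ∀ v ∈ C, f x v ≥ f x u + ⟪w, v - u⟫)
    (ρ : ℝ) (hρ : 0 < ρ)
    (x : ℕ → H) (hxC : ∀ k, x k ∈ C) (hxbd : ∃ M, ∀ k, ‖x k‖ ≤ M)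
    (y : ℕ → H) (hyC : ∀ k, y k ∈ C)
    (hymin : ∀ k, ∀ z ∈ C,
      f (x k) (y k) + ρ / 2 * ‖y k - x k‖ ^ 2 ≤ f (x k) z + ρ / 2 * ‖z - x k‖ ^ 2) :
    ∃ M, ∀ k, ‖y k‖ ≤ M := by
  by_contra hbd
  push_neg at hbd
  obtain ⟨Mx, hMx⟩ := hxbd
  have hMx0 : 0 ≤ Mx := le_trans (norm_nonneg _) (hMx 0)
  have hψex : ∀ n : ℕ, ∃ k, (n : ℝ) + Mx + 2 < ‖y k‖ := fun n => hbd _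
  choose ψ hψ using hψex
  set t : ℕ → ℝ := fun n => ‖y (ψ n) - x (ψ n)‖ with ht_def
  have ht : ∀ n : ℕ, (n : ℝ) + 2 ≤ t n := by
    intro n
    have h1 : ‖y (ψ n)‖ - ‖x (ψ n)‖ ≤ ‖y (ψ n) - x (ψ n)‖ := norm_sub_norm_le _ _
    have := hψ n
    have := hMx (ψ n)
    simp only [ht_def]
    linarith
  have ht1 : ∀ n, 1 ≤ t n := by
    intro n
    have := ht n
    have hn : (0:ℝ) ≤ n := Nat.cast_nonneg n
    linarith
  have htpos : ∀ n, 0 < t n := fun n => lt_of_lt_of_le one_pos (ht1 n)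
  set u : ℕ → H := fun n => x (ψ n) + (t n)⁻¹ • (y (ψ n) - x (ψ n)) with hu_def
  have hucomb : ∀ n, u n = (1 - (t n)⁻¹) • x (ψ n) + (t n)⁻¹ • y (ψ n) := by
    intro n
    simp only [hu_def, smul_sub, sub_smul, one_smul]
    abel
  have hl0 : ∀ n, (0:ℝ) ≤ (t n)⁻¹ := fun n => le_of_lt (inv_pos.mpr (htpos n))
  have hl1 : ∀ n, (t n)⁻¹ ≤ 1 := fun n => inv_le_one_of_one_le₀ (ht1 n)
  have huC : ∀ n, u n ∈ C := by
    intro n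
    rw [hucomb n]
    exact hconv (hxC (ψ n)) (hyC (ψ n)) (by linarith [hl1 n]) (hl0 n) (by ring)
  have hub : ∀ n, ‖u n‖ ≤ Mx + 1 := by
    intro n
    have h1 : ‖u n‖ ≤ ‖x (ψ n)‖ + ‖(t n)⁻¹ • (y (ψ n) - x (ψ n))‖ := norm_add_le _ _
    have h2 : ‖(t n)⁻¹ • (y (ψ n) - x (ψ n))‖ = (t n)⁻¹ * t n := by
      rw [norm_smul, Real.norm_eq_abs, abs_of_nonneg (hl0 n)]
    have h3 : (t n)⁻¹ * t n = 1 := inv_mul_cancel₀ (ne_of_gt (htpos n))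
    have := hMx (ψ n)
    rw [h2, h3] at h1
    linarith
  have hfyk : ∀ n, f (x (ψ n)) (y (ψ n)) ≤ -(ρ/2) * (t n)^2 := by
    intro n
    have h := hymin (ψ n) (x (ψ n)) (hxC (ψ n))
    rw [hf0 _ (hxC (ψ n)), sub_self, norm_zero] at h
    simp only [ht_def]
    nlinarith [h]
  have hfu : ∀ n, f (x (ψ n)) (u n) ≤ -(ρ/2) * t n := by
    intro n
    have hcv := (hconvf _ (hxC (ψ n))).2 (hxC (ψ n)) (hyC (ψ n))
      (by linarith [hl1 n] : (0:ℝ) ≤ 1 - (t n)⁻¹) (hl0 n) (by ring)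
    rw [← hucomb n, hf0 _ (hxC (ψ n))] at hcv
    have h2 : (t n)⁻¹ * f (x (ψ n)) (y (ψ n)) ≤ (t n)⁻¹ * (-(ρ/2) * (t n)^2) :=
      mul_le_mul_of_nonneg_left (hfyk n) (hl0 n)
    have htne : t n ≠ 0 := ne_of_gt (htpos n)
    have h3 : (t n)⁻¹ * (-(ρ/2) * (t n)^2) = -(ρ/2) * t n := by
      calc (t n)⁻¹ * (-(ρ/2) * (t n)^2) = -(ρ/2) * ((t n)⁻¹ * t n) * t n := by ring
        _ = -(ρ/2) * t n := by rw [inv_mul_cancel₀ htne]; ring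
    simp only [smul_eq_mul, mul_zero, zero_add] at hcv
    linarith [hcv, h2, h3]
  obtain ⟨xb, φ1, hφ1, hxb⟩ := weak_cpt (fun n => x (ψ n)) Mx (fun n => hMx _)
  obtain ⟨ub, φ2, hφ2, hub2⟩ := weak_cpt (fun n => u (φ1 n)) (Mx + 1) (fun n => hub _)
  set φ : ℕ → ℕ := φ1 ∘ φ2 with hφ_def
  have hφmono : StrictMono φ := hφ1.comp hφ2
  have hxb2 : ∀ v : H, Tendsto (fun n => ⟪x (ψ (φ n)), v⟫) atTop (𝓝 ⟪xb, v⟫) :=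
    fun v => (hxb v).comp hφ2.tendsto_atTop
  have hub3 : ∀ v : H, Tendsto (fun n => ⟪u (φ n), v⟫) atTop (𝓝 ⟪ub, v⟫) := hub2
  have hlimC : ∀ (b : ℕ → H), (∀ n, b n ∈ C) → ∀ z : H,
      (∀ v : H, Tendsto (fun n => ⟪b n, v⟫) atTop (𝓝 ⟪z, v⟫)) → z ∈ C := by
    intro b hb z hz
    by_contra hzC
    obtain ⟨g, r, hgz, hgC⟩ := geometric_hahn_banach_point_closed hconv hcl hzC
    set w : H := (InnerProductSpace.toDual ℝ H).symm g with hw_def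
    have hgw : ∀ h : H, g h = ⟪w, h⟫ := by
      intro h
      rw [← InnerProductSpace.toDual_apply_apply]
      simp [hw_def]
    have hge : ∀ n, r ≤ ⟪b n, w⟫ := by
      intro n
      rw [real_inner_comm, ← hgw]
      exact (hgC _ (hb n)).le
    have hrz : r ≤ ⟪z, w⟫ := ge_of_tendsto (hz w) (Eventually.of_forall hge)
    rw [real_inner_comm, ← hgw] at hrz
    linarith
  have hxbC : xb ∈ C := hlimC _ (fun n => hxC _) _ hxb2
  have hubC : ub ∈ C := hlimC _ (fun n => huC _) _ hub3
  have hlim := hwc xb (hCΩ hxbC) ub (hCΩ hubC) (fun n => x (ψ (φ n))) (fun n => u (φ n))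
    (fun n => hCΩ (hxC _)) (fun n => hCΩ (huC _)) hxb2 hub3
  have hdiv : Tendsto (fun n => f (x (ψ (φ n))) (u (φ n))) atTop atBot := by
    have hg : Tendsto (fun n : ℕ => -(ρ/2) * ((n : ℝ) + 2)) atTop atBot := by
      have h1 : Tendsto (fun n : ℕ => ((n : ℝ) + 2)) atTop atTop :=
        tendsto_atTop_add_const_right _ 2 tendsto_natCast_atTop_atTop
      have h2 : Tendsto (fun n : ℕ => (ρ/2) * ((n : ℝ) + 2)) atTop atTop :=
        h1.const_mul_atTop (by linarith)
      have h3 := tendsto_neg_atTop_atBot.comp h2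
      have heq : (fun n : ℕ => -(ρ/2) * ((n : ℝ) + 2))
          = Neg.neg ∘ (fun n : ℕ => (ρ/2) * ((n : ℝ) + 2)) := by
        funext n; simp [neg_mul]
      rw [heq]
      exact h3
    apply tendsto_atBot_mono _ hg
    intro n
    have h1 := hfu (φ n)
    have h2 : (n : ℝ) + 2 ≤ t (φ n) := by
      have := ht (φ n)
      have hnn : (n : ℝ) ≤ (φ n : ℝ) := Nat.cast_le.mpr (hφmono.le_apply)
      linarith
    nlinarith [h1, h2]
  exact (not_tendsto_nhds_of_tendsto_atBot hdiv _ hlim)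
end

section
/- Let C be a nonempty closed convex subset of a real Hilbert space, f an equilibrium bifunction satisfying: f(x,·) convex and subdifferentiable for each x; f pseudomonotone on C with respect to Sol(C,f) (i.e., f(x, x*) ≤ 0 for all x ∈ C and x* ∈ Sol(C,f)); and f Lipschitz-type continuous with constants L₁, L₂ > 0 (i.e., f(x,y) + f(y,z) ≥ f(x,z) − L₁‖x−y‖² − L₂‖y−z‖² for all x,y,z ∈ C). Let ρ_k > 0, x_k ∈ C, y_k = argmin{ ρ_k f(x_k, y) + (1/2)‖y − x_k‖² : y ∈ C }, and z_k = argmin{ ρ_k f(y_k, y) + (1/2)‖y − x_k‖² : y ∈ C }. Then for every x* ∈ Sol(C,f): ‖z_k − x*‖² ≤ ‖x_k − x*‖² − (1 − 2ρ_k L₁)‖x_k − y_k‖² − (1 − 2ρ_k L₂)‖y_k − z_k‖². -/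
open RealInnerProductSpace

/-- Variational inequality from prox minimization over a convex set. -/
lemma aux_varineq {H : Type*} [NormedAddCommGroup H] [InnerProductSpace ℝ H]
    (C : Set H) (hconv : Convex ℝ C) (g : H → ℝ) (hg : ConvexOn ℝ C g)
    (x z : H) (hzC : z ∈ C)
    (hmin : ∀ v ∈ C, g z + 1 / 2 * ‖z - x‖ ^ 2 ≤ g v + 1 / 2 * ‖v - x‖ ^ 2) :
    ∀ v ∈ C, ⟪x - z, v - z⟫ ≤ g v - g z := by
  intro v hv
  have key : ∀ t : ℝ, 0 < t → t ≤ 1 →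
      ⟪x - z, v - z⟫ ≤ g v - g z + t / 2 * ‖v - z‖ ^ 2 := by
    intro t ht ht1
    have hw : (1 - t) • z + t • v ∈ C := hconv hzC hv (by linarith) ht.le (by ring)
    have h1 := hmin _ hw
    have h2 := hg.2 hzC hv (by linarith : (0:ℝ) ≤ 1 - t) ht.le (by ring)
    have hweq : (1 - t) • z + t • v - x = (z - x) + t • (v - z) := by module
    have hexp : ‖(1 - t) • z + t • v - x‖ ^ 2
        = ‖z - x‖ ^ 2 + 2 * (t * ⟪z - x, v - z⟫) + t ^ 2 * ‖v - z‖ ^ 2 := by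
      rw [hweq, norm_add_sq_real, real_inner_smul_right, norm_smul]
      simp [abs_of_pos ht]
      ring
    rw [hexp] at h1
    have hip : ⟪x - z, v - z⟫ = -⟪z - x, v - z⟫ := by
      have hxz : x - z = -(z - x) := by abel
      rw [hxz, inner_neg_left]
    have hmul : t * ⟪x - z, v - z⟫ ≤ t * (g v - g z + t / 2 * ‖v - z‖ ^ 2) := by
      simp only [smul_eq_mul] at h2
      rw [hip]; nlinarith [h1, h2]
    exact le_of_mul_le_mul_left hmul ht
  apply le_of_forall_pos_le_add
  intro ε hε
  set s : ℝ := ‖v - z‖ ^ 2 / 2 with hs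
  have hs0 : 0 ≤ s := by positivity
  set t : ℝ := min 1 (ε / (1 + s)) with htdef
  have ht0 : 0 < t := lt_min one_pos (by positivity)
  have ht1 : t ≤ 1 := min_le_left _ _
  have hte : t ≤ ε / (1 + s) := min_le_right _ _
  have := key t ht0 ht1
  have hbound : t / 2 * ‖v - z‖ ^ 2 ≤ ε := by
    have h1s : (0:ℝ) < 1 + s := by linarith
    have : t * (1 + s) ≤ ε := by
      calc t * (1 + s) ≤ ε / (1 + s) * (1 + s) := by
            exact mul_le_mul_of_nonneg_right hte h1s.le
        _ = ε := by field_simp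
    nlinarith [mul_nonneg ht0.le hs0]
  linarith

/-- Extragradient estimate: for `x* ∈ Sol(C,f)`,
`‖z_k − x*‖² ≤ ‖x_k − x*‖² − (1 − 2ρ_k L₁)‖x_k − y_k‖² − (1 − 2ρ_k L₂)‖y_k − z_k‖²`. -/
theorem stmt_9 {H : Type*} [NormedAddCommGroup H] [InnerProductSpace ℝ H] [CompleteSpace H]
    (C : Set H) (hne : C.Nonempty) (hcl : IsClosed C) (hconv : Convex ℝ C)
    (f : H → H → ℝ) (hf0 : ∀ x ∈ C, f x x = 0)
    (hconvf : ∀ x ∈ C, ConvexOn ℝ C (f x))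
    (hsubdiff : ∀ x ∈ C, ∀ u ∈ C, ∃ w : H, ∀ v ∈ C, f x v ≥ f x u + ⟪w, v - u⟫)
    (hpseudo : ∀ x ∈ C, ∀ xstar ∈ {p ∈ C | ∀ y ∈ C, f p y ≥ 0}, f x xstar ≤ 0)
    (L₁ L₂ : ℝ) (hL₁ : 0 < L₁) (hL₂ : 0 < L₂)
    (hlip : ∀ x ∈ C, ∀ y ∈ C, ∀ z ∈ C,
      f x y + f y z ≥ f x z - L₁ * ‖x - y‖ ^ 2 - L₂ * ‖y - z‖ ^ 2)
    (ρ : ℝ) (hρ : 0 < ρ) (x : H) (hx : x ∈ C)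
    (y : H) (hyC : y ∈ C)
    (hymin : ∀ v ∈ C, ρ * f x y + 1 / 2 * ‖y - x‖ ^ 2 ≤ ρ * f x v + 1 / 2 * ‖v - x‖ ^ 2)
    (z : H) (hzC : z ∈ C)
    (hzmin : ∀ v ∈ C, ρ * f y z + 1 / 2 * ‖z - x‖ ^ 2 ≤ ρ * f y v + 1 / 2 * ‖v - x‖ ^ 2)
    (xstar : H) (hxstar : xstar ∈ {p ∈ C | ∀ v ∈ C, f p v ≥ 0}) :
    ‖z - xstar‖ ^ 2 ≤ ‖x - xstar‖ ^ 2 - (1 - 2 * ρ * L₁) * ‖x - y‖ ^ 2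
      - (1 - 2 * ρ * L₂) * ‖y - z‖ ^ 2 := by
  have hgx : ConvexOn ℝ C (fun v => ρ * f x v) := (hconvf x hx).smul hρ.le
  have hgy : ConvexOn ℝ C (fun v => ρ * f y v) := (hconvf y hyC).smul hρ.le
  have hy1 : ⟪x - y, z - y⟫ ≤ ρ * f x z - ρ * f x y :=
    aux_varineq C hconv (fun v => ρ * f x v) hgx x y hyC hymin z hzC
  have hz1 : ⟪x - z, xstar - z⟫ ≤ ρ * f y xstar - ρ * f y z :=
    aux_varineq C hconv (fun v => ρ * f y v) hgy x z hzC hzmin xstar hxstar.1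
  have hps : f y xstar ≤ 0 := hpseudo y hyC xstar hxstar
  have hlipρ : ρ * (f x y + f y z) ≥ ρ * (f x z - L₁ * ‖x - y‖ ^ 2 - L₂ * ‖y - z‖ ^ 2) :=
    mul_le_mul_of_nonneg_left (hlip x hx y hyC z hzC) hρ.le
  have hpsρ : ρ * f y xstar ≤ 0 := mul_nonpos_of_nonneg_of_nonpos hρ.le hps
  have e1 : ‖x - xstar‖ ^ 2 = ‖x - z‖ ^ 2 - 2 * ⟪x - z, xstar - z⟫ + ‖xstar - z‖ ^ 2 := by
    have h := norm_sub_sq_real (x - z) (xstar - z)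
    have h2 : x - z - (xstar - z) = x - xstar := by abel
    rw [h2] at h
    linarith
  have e2 : ‖x - z‖ ^ 2 = ‖x - y‖ ^ 2 + 2 * ⟪x - y, y - z⟫ + ‖y - z‖ ^ 2 := by
    have h := norm_add_sq_real (x - y) (y - z)
    have h2 : x - y + (y - z) = x - z := by abel
    rw [h2] at h
    linarith
  have e3 : ⟪x - y, z - y⟫ = -⟪x - y, y - z⟫ := by
    have h2 : z - y = -(y - z) := by abel
    rw [h2, inner_neg_right]
  have e4 : ‖xstar - z‖ = ‖z - xstar‖ := norm_sub_rev _ _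
  rw [e4] at e1
  nlinarith [hy1, hz1, hlipρ, hpsρ, e1, e2, e3]
end

section
/- Under the hypotheses of the extragradient estimate (pseudomonotone Lipschitz-type f with constants L₁, L₂ and 0 < ρ_k ≤ ρ̄ < min{1/(2L₁), 1/(2L₂)}), the extragradient step is Fejér monotone with respect to Sol(C,f): for y_k = argmin{ ρ_k f(x_k, y) + (1/2)‖y − x_k‖² : y ∈ C } and z_k = argmin{ ρ_k f(y_k, y) + (1/2)‖y − x_k‖² : y ∈ C }, one has ‖z_k − q‖ ≤ ‖x_k − q‖ for every q ∈ Sol(C,f). -/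
open RealInnerProductSpace

/-- Strong (quadratic) optimality inequality for the prox-step of a convex function. -/
lemma aux_strong_min {H : Type*} [NormedAddCommGroup H] [InnerProductSpace ℝ H]
    {C : Set H} (hconv : Convex ℝ C) {h : H → ℝ} (hh : ConvexOn ℝ C h)
    (x : H) {z : H} (hz : z ∈ C)
    (hmin : ∀ v ∈ C, h z + 1 / 2 * ‖z - x‖ ^ 2 ≤ h v + 1 / 2 * ‖v - x‖ ^ 2)
    {v : H} (hv : v ∈ C) :
    h z + 1 / 2 * ‖z - x‖ ^ 2 + 1 / 2 * ‖v - z‖ ^ 2 ≤ h v + 1 / 2 * ‖v - x‖ ^ 2 := by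
  set a : ℝ := h v - h z + ⟪z - x, v - z⟫ with ha_def
  set B : ℝ := ‖v - z‖ ^ 2 with hB_def
  have key : ∀ t : ℝ, 0 < t → t ≤ 1 → 0 ≤ a + t / 2 * B := by
    intro t ht ht1
    have hw : (1 - t) • z + t • v ∈ C := hconv hz hv (by linarith) ht.le (by ring)
    have hcv := hh.2 hz hv (by linarith : (0:ℝ) ≤ 1 - t) ht.le (by ring)
    have hm := hmin _ hw
    have hdecomp : ((1 - t) • z + t • v) - x = (z - x) + t • (v - z) := by
      rw [sub_smul, one_smul, smul_sub]; abel
    have hnorm : ‖((1 - t) • z + t • v) - x‖ ^ 2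
        = ‖z - x‖ ^ 2 + 2 * (t * ⟪z - x, v - z⟫) + t ^ 2 * ‖v - z‖ ^ 2 := by
      rw [hdecomp, norm_add_sq_real, real_inner_smul_right, norm_smul]
      rw [Real.norm_eq_abs, abs_of_pos ht]; ring
    have h1 : 0 ≤ t * (a + t / 2 * B) := by
      rw [hnorm] at hm
      simp only [smul_eq_mul] at hcv
      nlinarith [hm, hcv]
    nlinarith [h1, ht]
  have hB : 0 ≤ B := sq_nonneg _
  have ha : 0 ≤ a := by
    by_contra hlt
    push_neg at hlt
    rcases eq_or_lt_of_le hB with hB0 | hBpos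
    · have := key 1 one_pos le_rfl; nlinarith
    · set t : ℝ := min 1 (-a / B) with ht_def
      have ht0 : 0 < t := lt_min one_pos (div_pos (by linarith) hBpos)
      have hk := key t ht0 (min_le_left _ _)
      have htle : t ≤ -a / B := min_le_right _ _
      have h2 : t * B ≤ -a := (le_div_iff₀ hBpos).mp htle
      linarith
  have hid : ‖v - x‖ ^ 2 = ‖z - x‖ ^ 2 + 2 * ⟪z - x, v - z⟫ + ‖v - z‖ ^ 2 := by
    have hd : v - x = (z - x) + (v - z) := by abel
    rw [hd, norm_add_sq_real]
  simp only [ha_def, hB_def] at *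
  linarith

/-- Fejér monotonicity of the extragradient step: `‖z_k − q‖ ≤ ‖x_k − q‖`
for every `q ∈ Sol(C,f)`, when `0 < ρ_k ≤ ρ̄ < min{1/(2L₁), 1/(2L₂)}`. -/
theorem stmt_10 {H : Type*} [NormedAddCommGroup H] [InnerProductSpace ℝ H] [CompleteSpace H]
    (C : Set H) (hne : C.Nonempty) (hcl : IsClosed C) (hconv : Convex ℝ C)
    (f : H → H → ℝ) (hf0 : ∀ x ∈ C, f x x = 0)
    (hconvf : ∀ x ∈ C, ConvexOn ℝ C (f x))
    (hsubdiff : ∀ x ∈ C, ∀ u ∈ C, ∃ w : H, ∀ v ∈ C, f x v ≥ f x u + ⟪w, v - u⟫)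
    (hpseudo : ∀ x ∈ C, ∀ xstar ∈ {p ∈ C | ∀ y ∈ C, f p y ≥ 0}, f x xstar ≤ 0)
    (L₁ L₂ : ℝ) (hL₁ : 0 < L₁) (hL₂ : 0 < L₂)
    (hlip : ∀ x ∈ C, ∀ y ∈ C, ∀ z ∈ C,
      f x y + f y z ≥ f x z - L₁ * ‖x - y‖ ^ 2 - L₂ * ‖y - z‖ ^ 2)
    (ρ ρbar : ℝ) (hρpos : 0 < ρ) (hρbar : ρ ≤ ρbar)
    (hbar : ρbar < min (1 / (2 * L₁)) (1 / (2 * L₂)))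
    (x : H) (hx : x ∈ C)
    (y : H) (hyC : y ∈ C)
    (hymin : ∀ v ∈ C, ρ * f x y + 1 / 2 * ‖y - x‖ ^ 2 ≤ ρ * f x v + 1 / 2 * ‖v - x‖ ^ 2)
    (z : H) (hzC : z ∈ C)
    (hzmin : ∀ v ∈ C, ρ * f y z + 1 / 2 * ‖z - x‖ ^ 2 ≤ ρ * f y v + 1 / 2 * ‖v - x‖ ^ 2)
    (q : H) (hq : q ∈ {p ∈ C | ∀ v ∈ C, f p v ≥ 0}) :
    ‖z - q‖ ≤ ‖x - q‖ := by
  obtain ⟨hqC, hqsol⟩ := hq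
  -- convexity of the scaled bifunctions
  have hcx : ConvexOn ℝ C (fun v => ρ * f x v) := (hconvf x hx).smul hρpos.le
  have hcy : ConvexOn ℝ C (fun v => ρ * f y v) := (hconvf y hyC).smul hρpos.le
  -- strong optimality for the two prox steps
  have h₁ := aux_strong_min hconv hcx x hyC hymin hzC
  have h₂ := aux_strong_min hconv hcy x hzC hzmin hqC
  -- pseudomonotonicity at q
  have hfyq : f y q ≤ 0 := hpseudo y hyC q ⟨hqC, hqsol⟩
  have h3 : ρ * f y q ≤ 0 := mul_nonpos_of_nonneg_of_nonpos hρpos.le hfyq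
  -- Lipschitz-type inequality multiplied by ρ
  have hl := hlip x hx y hyC z hzC
  have h4 : ρ * f x z - ρ * L₁ * ‖x - y‖ ^ 2 - ρ * L₂ * ‖y - z‖ ^ 2
      ≤ ρ * f x y + ρ * f y z := by nlinarith [mul_le_mul_of_nonneg_left hl hρpos.le]
  -- bounds on ρL₁, ρL₂
  have hρ1 : ρ < 1 / (2 * L₁) := lt_of_le_of_lt hρbar (lt_of_lt_of_le hbar (min_le_left _ _))
  have hρ2 : ρ < 1 / (2 * L₂) := lt_of_le_of_lt hρbar (lt_of_lt_of_le hbar (min_le_right _ _))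
  have hρL₁ : ρ * L₁ ≤ 1 / 2 := by
    rw [lt_div_iff₀ (by positivity)] at hρ1; nlinarith
  have hρL₂ : ρ * L₂ ≤ 1 / 2 := by
    rw [lt_div_iff₀ (by positivity)] at hρ2; nlinarith
  have h5 : ρ * L₁ * ‖x - y‖ ^ 2 ≤ 1 / 2 * ‖x - y‖ ^ 2 :=
    mul_le_mul_of_nonneg_right hρL₁ (sq_nonneg _)
  have h6 : ρ * L₂ * ‖y - z‖ ^ 2 ≤ 1 / 2 * ‖y - z‖ ^ 2 :=
    mul_le_mul_of_nonneg_right hρL₂ (sq_nonneg _)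
  -- rewrite norms into matching orientations
  have e1 : ‖x - y‖ = ‖y - x‖ := norm_sub_rev _ _
  have e2 : ‖y - z‖ = ‖z - y‖ := norm_sub_rev _ _
  have e3 : ‖q - z‖ = ‖z - q‖ := norm_sub_rev _ _
  have e4 : ‖q - x‖ = ‖x - q‖ := norm_sub_rev _ _
  rw [e1] at h5
  rw [e2] at h6
  rw [e3, e4] at h₂
  rw [e1, e2] at h4
  have hsq : ‖z - q‖ ^ 2 ≤ ‖x - q‖ ^ 2 := by nlinarith [h₁, h₂, h3, h4, h5, h6]
  have := Real.sqrt_le_sqrt hsq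
  rwa [Real.sqrt_sq (norm_nonneg _), Real.sqrt_sq (norm_nonneg _)] at this
end

section
/- Let (x_k) be a sequence in a real Hilbert space H, x^g ∈ H, and suppose for each k the point x_{k+1} satisfies ⟨x − x_{k+1}, x^g − x_{k+1}⟩ ≤ 0 for all x in the set Q_k = {x ∈ H : ⟨x − x_k, x^g − x_k⟩ ≤ 0} (in particular x_{k+1} ∈ Q_k), and that (‖x_k − x^g‖) is bounded. Then ‖x_{k+1} − x_k‖² ≤ ‖x_{k+1} − x^g‖² − ‖x_k − x^g‖² for all k, the sequence (‖x_k − x^g‖) is nondecreasing and convergent, and ‖x_{k+1} − x_k‖ → 0. -/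
open RealInnerProductSpace Filter Topology

/-- If `x_{k+1}` is the projection of `x^g` onto a set contained in
`Q_k = {x : ⟪x − x_k, x^g − x_k⟫ ≤ 0}` and `(‖x_k − x^g‖)` is bounded, then
`‖x_{k+1} − x_k‖² ≤ ‖x_{k+1} − x^g‖² − ‖x_k − x^g‖²`, the sequence `(‖x_k − x^g‖)`
is nondecreasing and convergent, and `‖x_{k+1} − x_k‖ → 0`. -/
theorem stmt_12 {H : Type*} [NormedAddCommGroup H] [InnerProductSpace ℝ H]
    (xg : H) (x : ℕ → H)
    (hQ : ∀ k, ⟪x (k + 1) - x k, xg - x k⟫ ≤ 0)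
    (hbd : ∃ M, ∀ k, ‖x k - xg‖ ≤ M) :
    (∀ k, ‖x (k + 1) - x k‖ ^ 2 ≤ ‖x (k + 1) - xg‖ ^ 2 - ‖x k - xg‖ ^ 2) ∧
    Monotone (fun k => ‖x k - xg‖) ∧
    (∃ L, Tendsto (fun k => ‖x k - xg‖) atTop (𝓝 L)) ∧
    Tendsto (fun k => ‖x (k + 1) - x k‖) atTop (𝓝 0) := by
  have h1 : ∀ k, ‖x (k + 1) - x k‖ ^ 2 ≤ ‖x (k + 1) - xg‖ ^ 2 - ‖x k - xg‖ ^ 2 := by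
    intro k
    have key : ‖(x (k+1) - x k) - (xg - x k)‖ ^ 2
        = ‖x (k+1) - x k‖ ^ 2 - 2 * ⟪x (k+1) - x k, xg - x k⟫ + ‖xg - x k‖ ^ 2 :=
      norm_sub_sq_real _ _
    have e1 : (x (k+1) - x k) - (xg - x k) = x (k+1) - xg := by abel
    have e2 : ‖xg - x k‖ = ‖x k - xg‖ := by rw [norm_sub_rev]
    rw [e1, e2] at key
    nlinarith [hQ k]
  have hmono : Monotone (fun k => ‖x k - xg‖) := by
    apply monotone_nat_of_le_succ
    intro k
    have := h1 k
    have hsq : ‖x k - xg‖ ^ 2 ≤ ‖x (k + 1) - xg‖ ^ 2 := by nlinarith [sq_nonneg ‖x (k+1) - x k‖]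
    exact (pow_le_pow_iff_left₀ (norm_nonneg _) (norm_nonneg _) (by norm_num)).mp hsq
  have hconv : ∃ L, Tendsto (fun k => ‖x k - xg‖) atTop (𝓝 L) := by
    obtain ⟨M, hM⟩ := hbd
    exact ⟨_, tendsto_atTop_ciSup hmono ⟨M, fun y ⟨k, hk⟩ => hk ▸ hM k⟩⟩
  obtain ⟨L, hL⟩ := hconv
  refine ⟨h1, hmono, ⟨L, hL⟩, ?_⟩
  have hsq0 : Tendsto (fun k => ‖x (k + 1) - x k‖ ^ 2) atTop (𝓝 0) := by
    have hA : Tendsto (fun k => ‖x (k+1) - xg‖ ^ 2 - ‖x k - xg‖ ^ 2) atTop (𝓝 (L^2 - L^2)) := by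
      exact ((hL.comp (tendsto_add_atTop_nat 1)).pow 2).sub (hL.pow 2)
    rw [sub_self] at hA
    refine squeeze_zero (fun k => sq_nonneg _) (fun k => h1 k) hA
  have : Tendsto (fun k => Real.sqrt (‖x (k + 1) - x k‖ ^ 2)) atTop (𝓝 (Real.sqrt 0)) :=
    (Real.continuous_sqrt.continuousAt).tendsto.comp hsq0
  simpa [Real.sqrt_sq (norm_nonneg _)] using this
end

section
/- Let C be a nonempty closed convex subset of a real Hilbert space, f an equilibrium bifunction with f(x,·) convex and subdifferentiable on C for each x, and x ∈ C. If y = argmin{ ρ f(x, w) + (1/2)‖w − x‖² : w ∈ C } satisfies y = x, then x ∈ Sol(C, f), i.e., f(x, w) ≥ 0 for all w ∈ C. -/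
open RealInnerProductSpace

/-- If the unique minimizer of `w ↦ ρ f(x, w) + (1/2)‖w − x‖²` over `C` is `x` itself,
then `x` solves the equilibrium problem: `f(x, w) ≥ 0` for all `w ∈ C`. -/
theorem stmt_14 {H : Type*} [NormedAddCommGroup H] [InnerProductSpace ℝ H] [CompleteSpace H]
    (C : Set H) (hne : C.Nonempty) (hcl : IsClosed C) (hconv : Convex ℝ C)
    (f : H → H → ℝ) (hf0 : ∀ x ∈ C, f x x = 0)
    (hconvf : ∀ x ∈ C, ConvexOn ℝ C (f x))
    (hsubdiff : ∀ x ∈ C, ∀ u ∈ C, ∃ w : H, ∀ v ∈ C, f x v ≥ f x u + ⟪w, v - u⟫)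
    (ρ : ℝ) (hρ : 0 < ρ) (x : H) (hx : x ∈ C)
    (hmin : ∀ w ∈ C, ρ * f x x + 1 / 2 * ‖x - x‖ ^ 2 ≤ ρ * f x w + 1 / 2 * ‖w - x‖ ^ 2) :
    ∀ w ∈ C, f x w ≥ 0 := by
  intro w hw
  by_contra h
  push_neg at h
  have hfxx : f x x = 0 := hf0 x hx
  set d : ℝ := ‖w - x‖ ^ 2 with hd
  have hd0 : 0 < d := by
    rcases eq_or_lt_of_le (sq_nonneg ‖w - x‖) with h0 | h0
    · exfalso
      have : ‖w - x‖ = 0 := by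
        have := h0.symm
        nlinarith [norm_nonneg (w - x)]
      have hwx : w = x := sub_eq_zero.mp (norm_eq_zero.mp this)
      rw [hwx, hfxx] at h; linarith
    · exact h0
  set t : ℝ := min 1 (-ρ * f x w / d) with ht
  have ht0 : 0 < t := lt_min one_pos (div_pos (by nlinarith) hd0)
  have ht1 : t ≤ 1 := min_le_left _ _
  have htd : t * d ≤ -ρ * f x w := by
    have := min_le_right 1 (-ρ * f x w / d)
    calc t * d ≤ (-ρ * f x w / d) * d := by nlinarith
    _ = -ρ * f x w := by field_simp
  set z : H := (1 - t) • x + t • w with hz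
  have hzC : z ∈ C := hconv hx hw (by linarith) ht0.le (by ring)
  have hconvineq : f x z ≤ (1 - t) * f x x + t * f x w :=
    (hconvf x hx).2 hx hw (by linarith) ht0.le (by ring)
  have hnorm : ‖z - x‖ ^ 2 = t ^ 2 * d := by
    have : z - x = t • (w - x) := by
      rw [hz]; module
    rw [this, norm_smul]
    simp [hd, mul_pow, abs_of_pos ht0]
  have hm := hmin z hzC
  rw [hfxx, hnorm] at hm
  simp only [sub_self, norm_zero] at hm
  rw [hfxx, mul_zero, zero_add] at hconvineq
  have key : (0:ℝ) ≤ ρ * (t * f x w) + 1 / 2 * (t ^ 2 * d) := by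
    nlinarith [mul_le_mul_of_nonneg_left hconvineq hρ.le]
  nlinarith [mul_le_mul_of_nonneg_left htd (mul_pos ht0 hρ).le, mul_pos hρ ht0]
end

section
/- (Armijo linesearch well-definedness) Let C be a nonempty closed convex subset of an open convex set Ω in a real Hilbert space, and f : Ω × Ω → ℝ jointly weakly continuous with f(x,·) convex and subdifferentiable on C, f(x,x)=0. Let x ∈ C, ρ > 0, μ, η ∈ (0,1), and y = argmin{ ρ f(x, w) + (1/2)‖w − x‖² : w ∈ C } with y ≠ x. Then there exists a smallest positive integer m such that, setting z = (1 − η^m)x + η^m y, one has f(z, x) − f(z, y) ≥ (μ/(2ρ))‖x − y‖². -/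
open RealInnerProductSpace Filter Topology

/-- Well-definedness of the Armijo linesearch: there exists a smallest positive integer `m`
with `f(z_m, x) − f(z_m, y) ≥ (μ/(2ρ))‖x − y‖²` where `z_m = (1 − η^m) x + η^m y`. -/
theorem stmt_15 {H : Type*} [NormedAddCommGroup H] [InnerProductSpace ℝ H] [CompleteSpace H]
    (C Ω : Set H) (hne : C.Nonempty) (hcl : IsClosed C) (hconv : Convex ℝ C)
    (hΩopen : IsOpen Ω) (hΩconv : Convex ℝ Ω) (hCΩ : C ⊆ Ω)
    (f : H → H → ℝ) (hf0 : ∀ x ∈ C, f x x = 0)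
    (hwc : ∀ x ∈ Ω, ∀ y ∈ Ω, ∀ (xk yk : ℕ → H), (∀ k, xk k ∈ Ω) → (∀ k, yk k ∈ Ω) →
      (∀ v : H, Tendsto (fun k => ⟪xk k, v⟫) atTop (𝓝 ⟪x, v⟫)) →
      (∀ v : H, Tendsto (fun k => ⟪yk k, v⟫) atTop (𝓝 ⟪y, v⟫)) →
      Tendsto (fun k => f (xk k) (yk k)) atTop (𝓝 (f x y)))
    (hconvf : ∀ x ∈ C, ConvexOn ℝ C (f x))
    (hsubdiff : ∀ x ∈ C, ∀ u ∈ C, ∃ w : H, ∀ v ∈ C, f x v ≥ f x u + ⟪w, v - u⟫)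
    (ρ μ η : ℝ) (hρ : 0 < ρ) (hμ : μ ∈ Set.Ioo (0:ℝ) 1) (hη : η ∈ Set.Ioo (0:ℝ) 1)
    (x : H) (hx : x ∈ C) (y : H) (hyC : y ∈ C) (hxy : y ≠ x)
    (hymin : ∀ w ∈ C, ρ * f x y + 1 / 2 * ‖y - x‖ ^ 2 ≤ ρ * f x w + 1 / 2 * ‖w - x‖ ^ 2) :
    ∃ m : ℕ, 0 < m ∧
      f ((1 - η ^ m) • x + η ^ m • y) x - f ((1 - η ^ m) • x + η ^ m • y) y
        ≥ μ / (2 * ρ) * ‖x - y‖ ^ 2 ∧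
      ∀ m' : ℕ, 0 < m' →
        f ((1 - η ^ m') • x + η ^ m' • y) x - f ((1 - η ^ m') • x + η ^ m' • y) y
          ≥ μ / (2 * ρ) * ‖x - y‖ ^ 2 → m ≤ m' := by
  classical
  set z : ℕ → H := fun m => (1 - η ^ m) • x + η ^ m • y with hz
  have hzC : ∀ m, z m ∈ C := fun m =>
    hconv hx hyC (by nlinarith [pow_le_one₀ hη.1.le hη.2.le (n := m), pow_nonneg hη.1.le m])
      (pow_nonneg hη.1.le m) (by ring)
  -- z m → x strongly
  have hpow : Tendsto (fun m => η ^ m) atTop (𝓝 (0:ℝ)) :=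
    tendsto_pow_atTop_nhds_zero_of_lt_one hη.1.le hη.2
  have hzx : Tendsto z atTop (𝓝 x) := by
    have : Tendsto (fun m => x + (η ^ m) • (y - x)) atTop (𝓝 (x + (0:ℝ) • (y - x))) :=
      tendsto_const_nhds.add (hpow.smul_const _)
    simpa only [zero_smul, add_zero] using this.congr (fun m => by
      simp [hz, smul_sub, sub_smul, one_smul]; abel)
  have hweak : ∀ v : H, Tendsto (fun m => ⟪z m, v⟫) atTop (𝓝 ⟪x, v⟫) := fun v =>
    hzx.inner tendsto_const_nhds
  have hconstweak : ∀ u : H, ∀ v : H,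
      Tendsto (fun _ : ℕ => ⟪u, v⟫) atTop (𝓝 ⟪u, v⟫) := fun u v => tendsto_const_nhds
  have h1 : Tendsto (fun m => f (z m) x) atTop (𝓝 (f x x)) :=
    hwc x (hCΩ hx) x (hCΩ hx) z (fun _ => x) (fun m => hCΩ (hzC m)) (fun _ => hCΩ hx)
      hweak (hconstweak x)
  have h2 : Tendsto (fun m => f (z m) y) atTop (𝓝 (f x y)) :=
    hwc x (hCΩ hx) y (hCΩ hyC) z (fun _ => y) (fun m => hCΩ (hzC m)) (fun _ => hCΩ hyC)
      hweak (hconstweak y)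
  have hfxy : f x y ≤ -(1 / (2 * ρ)) * ‖x - y‖ ^ 2 := by
    have := hymin x hx
    rw [hf0 x hx] at this
    have hn : ‖y - x‖ = ‖x - y‖ := by rw [← neg_sub, norm_neg]
    rw [hn] at this
    simp only [sub_self, norm_zero] at this
    have h' : f x y ≤ (-(1/2) * ‖x - y‖ ^ 2) / ρ := by
      rw [le_div_iff₀ hρ]; nlinarith
    have heq : (-(1/2) * ‖x - y‖ ^ 2) / ρ = -(1 / (2 * ρ)) * ‖x - y‖ ^ 2 := by
      field_simp
    linarith
  have hnorm : 0 < ‖x - y‖ ^ 2 := by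
    have : (0:ℝ) < ‖x - y‖ := norm_pos_iff.mpr (sub_ne_zero.mpr (Ne.symm hxy))
    positivity
  have hlt : μ / (2 * ρ) * ‖x - y‖ ^ 2 < f x x - f x y := by
    have hc : (0:ℝ) < 1 / (2 * ρ) := by positivity
    have hμc : μ / (2 * ρ) = μ * (1 / (2 * ρ)) := by ring
    rw [hf0 x hx, hμc]
    nlinarith [hfxy, mul_pos hc hnorm, hμ.2]
  have htend : Tendsto (fun m => f (z m) x - f (z m) y) atTop (𝓝 (f x x - f x y)) :=
    h1.sub h2
  have hev : ∀ᶠ m in atTop,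
      μ / (2 * ρ) * ‖x - y‖ ^ 2 < f (z m) x - f (z m) y :=
    htend.eventually (eventually_gt_nhds hlt)
  obtain ⟨N, hN⟩ := eventually_atTop.mp hev
  have hexists : ∃ m : ℕ, 0 < m ∧
      f (z m) x - f (z m) y ≥ μ / (2 * ρ) * ‖x - y‖ ^ 2 :=
    ⟨N + 1, Nat.succ_pos N, (hN (N + 1) (Nat.le_succ N)).le⟩
  refine ⟨Nat.find hexists, (Nat.find_spec hexists).1, (Nat.find_spec hexists).2,
    fun m' h1' h2' => Nat.find_min' hexists ⟨h1', h2'⟩⟩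
end

section
/- In the Armijo linesearch setting, with z = (1 − η^m)x + η^m y satisfying f(z, x) − f(z, y) ≥ (μ/(2ρ))‖x − y‖², μ ∈ (0,1), and y ≠ x, one has f(z, x) > 0. Moreover 0 ∉ ∂₂f(z, x). -/
open RealInnerProductSpace

/-- In the Armijo linesearch setting, `f(z, x) > 0` and `0 ∉ ∂₂ f(z, x)`. -/
theorem stmt_16 {H : Type*} [NormedAddCommGroup H] [InnerProductSpace ℝ H]
    (C : Set H) (hne : C.Nonempty) (hcl : IsClosed C) (hconv : Convex ℝ C)
    (f : H → H → ℝ) (hf0 : ∀ w ∈ C, f w w = 0)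
    (hconvf : ∀ w ∈ C, ConvexOn ℝ C (f w))
    (ρ μ η : ℝ) (hρ : 0 < ρ) (hμ : μ ∈ Set.Ioo (0:ℝ) 1) (hη : η ∈ Set.Ioo (0:ℝ) 1)
    (m : ℕ) (hm : 0 < m)
    (x y z : H) (hx : x ∈ C) (hy : y ∈ C) (hxy : y ≠ x)
    (hz : z = (1 - η ^ m) • x + η ^ m • y)
    (harmijo : f z x - f z y ≥ μ / (2 * ρ) * ‖x - y‖ ^ 2) :
    0 < f z x ∧ (0 : H) ∉ {w : H | ∀ v ∈ C, f z v ≥ f z x + ⟪w, v - x⟫} := by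
  obtain ⟨hμ0, hμ1⟩ := hμ
  obtain ⟨hη0, hη1⟩ := hη
  set t := η ^ m with ht
  have ht0 : 0 < t := pow_pos hη0 m
  have ht1 : t < 1 := pow_lt_one₀ hη0.le hη1 hm.ne'
  have hzC : z ∈ C := by
    rw [hz]
    exact hconv hx hy (by linarith) ht0.le (by ring)
  have hzz : f z z = 0 := hf0 z hzC
  have hcvx : f z ((1 - t) • x + t • y) ≤ (1 - t) * f z x + t * f z y :=
    (hconvf z hzC).2 hx hy (by linarith) ht0.le (by ring)
  rw [← hz, hzz] at hcvx
  have hc : 0 < μ / (2 * ρ) * ‖x - y‖ ^ 2 := by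
    have : 0 < ‖x - y‖ := norm_pos_iff.mpr (sub_ne_zero.mpr (Ne.symm hxy))
    positivity
  have hfx : 0 < f z x := by nlinarith
  refine ⟨hfx, fun h => ?_⟩
  have := h z hzC
  simp [hzz, real_inner_comm] at this
  linarith
end

section
/- (Projection-step estimate for the linesearch extragradient method) Let C be a nonempty closed convex subset of a real Hilbert space, f an equilibrium bifunction pseudomonotone on C with respect to Sol(C,f), x ∈ C, z ∈ C with f(z, x) > 0, w ∈ ∂₂f(z, x) with w ≠ 0, σ = f(z, x)/‖w‖², γ ∈ (0,2), and v = P_C(x − γσw). Then for every p ∈ Sol(C,f): ‖v − p‖² ≤ ‖x − p‖² − γ(2 − γ)(σ‖w‖)². -/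
open RealInnerProductSpace

/-- Projection-step estimate of the linesearch extragradient method:
`‖v − p‖² ≤ ‖x − p‖² − γ(2 − γ)(σ‖w‖)²` for every `p ∈ Sol(C,f)`. -/
theorem stmt_17 {H : Type*} [NormedAddCommGroup H] [InnerProductSpace ℝ H] [CompleteSpace H]
    (C : Set H) (hne : C.Nonempty) (hcl : IsClosed C) (hconv : Convex ℝ C)
    (f : H → H → ℝ) (hf0 : ∀ u ∈ C, f u u = 0)
    (hpseudo : ∀ u ∈ C, ∀ p ∈ {q ∈ C | ∀ y ∈ C, f q y ≥ 0}, f u p ≤ 0)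
    (P : H → H)
    (hP : ∀ a : H, P a ∈ C ∧ ∀ b ∈ C, ‖a - P a‖ ≤ ‖a - b‖)
    (x z : H) (hx : x ∈ C) (hz : z ∈ C) (hfzx : 0 < f z x)
    (w : H) (hw : ∀ v ∈ C, f z v ≥ f z x + ⟪w, v - x⟫) (hw0 : w ≠ 0)
    (σ : ℝ) (hσ : σ = f z x / ‖w‖ ^ 2)
    (γ : ℝ) (hγ : γ ∈ Set.Ioo (0:ℝ) 2)
    (v : H) (hv : v = P (x - (γ * σ) • w))
    (p : H) (hp : p ∈ {q ∈ C | ∀ y ∈ C, f q y ≥ 0}) :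
    ‖v - p‖ ^ 2 ≤ ‖x - p‖ ^ 2 - γ * (2 - γ) * (σ * ‖w‖) ^ 2 := by
  obtain ⟨hγ0, hγ2⟩ := hγ
  have hpC : p ∈ C := hp.1
  set u : H := x - (γ * σ) • w with hu
  have hvC : v ∈ C := hv ▸ (hP u).1
  -- projection variational inequality
  have hmin : ∀ b ∈ C, ‖u - v‖ ≤ ‖u - b‖ := by
    intro b hb; rw [hv]; exact (hP u).2 b hb
  haveI : Nonempty C := ⟨⟨v, hvC⟩⟩
  have hinf : ‖u - v‖ = ⨅ b : C, ‖u - b‖ := by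
    apply le_antisymm
    · exact le_ciInf fun b => hmin b b.2
    · exact ciInf_le ⟨0, fun r ⟨b, hb⟩ => hb ▸ norm_nonneg _⟩ (⟨v, hvC⟩ : C)
  have hvi : ⟪u - v, p - v⟫ ≤ 0 :=
    (norm_eq_iInf_iff_real_inner_le_zero hconv hvC).mp hinf p hpC
  -- norm of w positive
  have hwn : (0:ℝ) < ‖w‖ := norm_pos_iff.mpr hw0
  have hσw : σ * ‖w‖ ^ 2 = f z x := by
    rw [hσ]; field_simp
  have hσpos : 0 < σ := by
    rw [hσ]; positivity
  -- inner product bound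
  have hfzp : f z p ≤ 0 := hpseudo z hz p hp
  have hsub : f z p ≥ f z x + ⟪w, p - x⟫ := hw p hpC
  have hinner : σ * ‖w‖ ^ 2 ≤ ⟪w, x - p⟫ := by
    have : ⟪w, p - x⟫ = -⟪w, x - p⟫ := by
      rw [← inner_neg_right]; congr 1; abel
    rw [hσw]; linarith [hsub, hfzp, this ▸ hsub]
  -- pythagoras decomposition
  have hdecomp : ‖u - p‖ ^ 2 = ‖u - v‖ ^ 2 + 2 * ⟪u - v, v - p⟫ + ‖v - p‖ ^ 2 := by
    have h1 : u - p = (u - v) + (v - p) := by abel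
    rw [h1, @norm_add_sq_real]
  have hvp : ⟪u - v, v - p⟫ = -⟪u - v, p - v⟫ := by
    rw [← inner_neg_right]; congr 1; abel
  -- expansion of ‖u - p‖²
  have hexp : ‖u - p‖ ^ 2 = ‖x - p‖ ^ 2 - 2 * (γ * σ) * ⟪w, x - p⟫ + (γ * σ) ^ 2 * ‖w‖ ^ 2 := by
    have h1 : u - p = (x - p) - (γ * σ) • w := by rw [hu]; abel
    rw [h1, @norm_sub_sq_real, real_inner_smul_right, norm_smul]
    simp [mul_pow, abs_mul_abs_self, sq_abs]
    rw [real_inner_comm (x - p) w]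
    ring
  have hflip : (0:ℝ) ≤ ⟪u - v, v - p⟫ := by rw [hvp]; linarith
  have huv : (0:ℝ) ≤ ‖u - v‖ ^ 2 := by positivity
  nlinarith [hdecomp, hexp, hinner, mul_le_mul_of_nonneg_left hinner
    (by positivity : (0:ℝ) ≤ 2 * (γ * σ)), sq_nonneg (σ * ‖w‖)]
end

section
/- Let C be a nonempty closed convex subset of a real Hilbert space, f jointly weakly continuous on C × C with f(x,·) convex and subdifferentiable, and (ρ_k) ⊆ [ρ̲, ρ̄] with 0 < ρ̲ ≤ ρ̄. Suppose (x_k) ⊆ C converges weakly to p, y_k = argmin{ ρ_k f(x_k, y) + (1/2)‖y − x_k‖² : y ∈ C }, and ‖x_k − y_k‖ → 0. Then p ∈ Sol(C, f), i.e., f(p, y) ≥ 0 for all y ∈ C. -/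
open RealInnerProductSpace Filter Topology

/-- If `x_k ⇀ p`, `y_k` solves the regularized subproblem and `‖x_k − y_k‖ → 0`,
then `p` solves the equilibrium problem. -/
theorem stmt_18 {H : Type*} [NormedAddCommGroup H] [InnerProductSpace ℝ H] [CompleteSpace H]
    (C : Set H) (hne : C.Nonempty) (hcl : IsClosed C) (hconv : Convex ℝ C)
    (f : H → H → ℝ) (hf0 : ∀ x ∈ C, f x x = 0)
    (hwc : ∀ x ∈ C, ∀ y ∈ C, ∀ (xk yk : ℕ → H), (∀ k, xk k ∈ C) → (∀ k, yk k ∈ C) →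
      (∀ v : H, Tendsto (fun k => ⟪xk k, v⟫) atTop (𝓝 ⟪x, v⟫)) →
      (∀ v : H, Tendsto (fun k => ⟪yk k, v⟫) atTop (𝓝 ⟪y, v⟫)) →
      Tendsto (fun k => f (xk k) (yk k)) atTop (𝓝 (f x y)))
    (hconvf : ∀ x ∈ C, ConvexOn ℝ C (f x))
    (hsubdiff : ∀ x ∈ C, ∀ u ∈ C, ∃ w : H, ∀ v ∈ C, f x v ≥ f x u + ⟪w, v - u⟫)
    (ρlow ρbar : ℝ) (hρlow : 0 < ρlow) (hρle : ρlow ≤ ρbar)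
    (ρ : ℕ → ℝ) (hρ : ∀ k, ρ k ∈ Set.Icc ρlow ρbar)
    (x : ℕ → H) (hxC : ∀ k, x k ∈ C) (p : H)
    (hweak : ∀ v : H, Tendsto (fun k => ⟪x k, v⟫) atTop (𝓝 ⟪p, v⟫))
    (y : ℕ → H) (hyC : ∀ k, y k ∈ C)
    (hymin : ∀ k, ∀ w ∈ C,
      ρ k * f (x k) (y k) + 1 / 2 * ‖y k - x k‖ ^ 2 ≤ ρ k * f (x k) w + 1 / 2 * ‖w - x k‖ ^ 2)
    (hdiff : Tendsto (fun k => ‖x k - y k‖) atTop (𝓝 0)) :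
    ∀ w ∈ C, f p w ≥ 0 := by

  -- first: p ∈ C (weak limits of sequences in a closed convex set stay in the set)
  have hpC : p ∈ C := by
    obtain ⟨q, hqC, hq⟩ := exists_norm_eq_iInf_of_complete_convex hne hcl.isComplete hconv p
    have hproj := (norm_eq_iInf_iff_real_inner_le_zero hconv hqC).mp hq
    have hlim : Tendsto (fun k => ⟪x k, p - q⟫ - ⟪q, p - q⟫) atTop
        (𝓝 (⟪p, p - q⟫ - ⟪q, p - q⟫)) := (hweak (p - q)).sub_const _
    have hle : ⟪p, p - q⟫ - ⟪q, p - q⟫ ≤ 0 := by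
      refine le_of_tendsto hlim (Eventually.of_forall fun k => ?_)
      have h1 := hproj (x k) (hxC k)
      have h2 : ⟪p - q, x k - q⟫ = ⟪x k, p - q⟫ - ⟪q, p - q⟫ := by
        rw [real_inner_comm, inner_sub_left]
      linarith
    have hpq : ⟪p - q, p - q⟫ ≤ 0 := by rw [inner_sub_left]; linarith
    have : p - q = 0 := real_inner_self_nonpos.mp hpq
    have : p = q := by rwa [sub_eq_zero] at this
    rw [this]; exact hqC
  -- boundedness of (x k) via Banach–Steinhaus
  obtain ⟨M, hM⟩ : ∃ M, ∀ k, ‖x k‖ ≤ M := by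
    have h := banach_steinhaus (g := fun k : ℕ => innerSL ℝ (x k)) ?_
    · obtain ⟨C', hC'⟩ := h
      refine ⟨C', fun k => ?_⟩
      have := hC' k
      rwa [innerSL_apply_norm] at this
    · intro v
      have hb : BddAbove (Set.range fun k => ‖⟪x k, v⟫‖) := ((hweak v).norm).bddAbove_range
      obtain ⟨Cv, hCv⟩ := hb
      exact ⟨Cv, fun k => hCv ⟨k, rfl⟩⟩
  -- y k converges weakly to p as well
  have hyweak : ∀ v : H, Tendsto (fun k => ⟪y k, v⟫) atTop (𝓝 ⟪p, v⟫) := by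
    intro v
    have h1 : Tendsto (fun k => ⟪x k - y k, v⟫) atTop (𝓝 0) := by
      refine squeeze_zero_norm (fun k => abs_real_inner_le_norm _ _) ?_
      simpa using hdiff.mul_const ‖v‖
    have h2 := (hweak v).sub h1
    simpa [inner_sub_left] using h2
  -- limits of the relevant f-values
  have hfxy : Tendsto (fun k => f (x k) (y k)) atTop (𝓝 0) := by
    have := hwc p hpC p hpC x y hxC hyC hweak hyweak
    rwa [hf0 p hpC] at this
  intro w hw
  by_contra hneg
  push_neg at hneg
  have hfxw : Tendsto (fun k => f (x k) w) atTop (𝓝 (f p w)) :=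
    hwc p hpC w hw x (fun _ => w) hxC (fun _ => hw) hweak (fun v => tendsto_const_nhds)
  -- key inequality from the optimality of y k
  have key : ∀ k, ⟪x k - y k, w - y k⟫ ≤ ρ k * (f (x k) w - f (x k) (y k)) := by
    intro k
    obtain ⟨hρl, hρb⟩ := hρ k
    have hρpos : 0 < ρ k := lt_of_lt_of_le hρlow hρl
    refine le_of_forall_pos_le_add fun ε hε => ?_
    set D : ℝ := ‖w - y k‖ ^ 2 with hD
    have hDnn : 0 ≤ D := sq_nonneg _
    set t : ℝ := min 1 (ε / (D / 2 + 1)) with ht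
    have ht0 : 0 < t := lt_min one_pos (div_pos hε (by linarith))
    have ht1 : t ≤ 1 := min_le_left _ _
    have htε : t * (D / 2) ≤ ε := by
      have h1 : t ≤ ε / (D / 2 + 1) := min_le_right _ _
      have h2 : t * (D / 2 + 1) ≤ ε := by
        rw [← le_div_iff₀ (by linarith)]
        exact h1
      nlinarith
    set z : H := (1 - t) • y k + t • w with hz
    have ha : (0:ℝ) ≤ 1 - t := by linarith
    have hab : (1 - t) + t = 1 := by ring
    have hzC : z ∈ C := hconv (hyC k) hw ha (le_of_lt ht0) hab
    have hcvx := (hconvf (x k) (hxC k)).2 (hyC k) hw ha (le_of_lt ht0) hab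
    simp only [smul_eq_mul] at hcvx
    have hzsub : z - x k = (y k - x k) + t • (w - y k) := by
      simp only [hz, smul_sub, sub_smul, one_smul]
      abel
    have hnorm : ‖z - x k‖ ^ 2 =
        ‖y k - x k‖ ^ 2 + 2 * (t * ⟪y k - x k, w - y k⟫) + t ^ 2 * D := by
      rw [hzsub, norm_add_sq_real, real_inner_smul_right, norm_smul]
      rw [hD]
      rw [mul_pow]
      simp [abs_of_pos ht0]
    have hmin := hymin k z hzC
    have hflip : ⟪y k - x k, w - y k⟫ = -⟪x k - y k, w - y k⟫ := by
      rw [← neg_sub (x k) (y k), inner_neg_left]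
    have hstep : t * ⟪x k - y k, w - y k⟫ ≤
        t * (ρ k * (f (x k) w - f (x k) (y k))) + t ^ 2 * (D / 2) := by
      nlinarith [hmin, hnorm, hcvx, hflip, mul_le_mul_of_nonneg_left hcvx (le_of_lt hρpos)]
    have := (mul_le_mul_iff_right₀ ht0).mp (by nlinarith : t * ⟪x k - y k, w - y k⟫ ≤
        t * (ρ k * (f (x k) w - f (x k) (y k)) + t * (D / 2)))
    nlinarith
  -- the inner-product term tends to 0
  have hI : Tendsto (fun k => ⟪x k - y k, w - y k⟫) atTop (𝓝 0) := by
    refine squeeze_zero_norm (a := fun k => ‖x k - y k‖ * (‖w‖ + M + ‖x k - y k‖)) (fun k => ?_) ?_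
    ·
      have h1 : |⟪x k - y k, w - y k⟫| ≤ ‖x k - y k‖ * ‖w - y k‖ :=
        abs_real_inner_le_norm _ _
      have h2 : ‖w - y k‖ ≤ ‖w‖ + M + ‖x k - y k‖ := by
        have h3 : ‖w - y k‖ ≤ ‖w - x k‖ + ‖x k - y k‖ := by
          have := norm_sub_le_norm_sub_add_norm_sub w (x k) (y k)
          exact this
        have h4 : ‖w - x k‖ ≤ ‖w‖ + ‖x k‖ := norm_sub_le _ _
        have := hM k
        linarith
      calc |⟪x k - y k, w - y k⟫| ≤ ‖x k - y k‖ * ‖w - y k‖ := h1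
        _ ≤ ‖x k - y k‖ * (‖w‖ + M + ‖x k - y k‖) :=
          mul_le_mul_of_nonneg_left h2 (norm_nonneg _)
    · have : Tendsto (fun k => ‖x k - y k‖ * (‖w‖ + M + ‖x k - y k‖)) atTop
          (𝓝 (0 * (‖w‖ + M + 0))) := hdiff.mul (tendsto_const_nhds.add hdiff)
      simpa using this
  -- derive the contradiction
  set c : ℝ := f p w with hc
  have hs : Tendsto (fun k => f (x k) w - f (x k) (y k)) atTop (𝓝 c) := by
    have := hfxw.sub hfxy
    simpa using this
  have h1 : ∀ᶠ k in atTop, f (x k) w - f (x k) (y k) < c / 2 :=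
    hs.eventually_lt_const (by linarith)
  have h2 : ∀ᶠ k in atTop, ρlow * (c / 2) < ⟪x k - y k, w - y k⟫ :=
    hI.eventually_const_lt (by nlinarith)
  obtain ⟨k, hk1, hk2⟩ := (h1.and h2).exists
  obtain ⟨hρl, hρb⟩ := hρ k
  have hρpos : 0 < ρ k := lt_of_lt_of_le hρlow hρl
  have := key k
  nlinarith
end

section
/- Let q be a point of a real Hilbert space, x, t, z, u points with t = αx + (1−α)Tx, u = βt + (1−β)Tz, where α ∈ [0,1], β ∈ [0, β̄] ⊆ [0,1), ‖Tx − q‖ ≤ ‖x − q‖, ‖Tz − q‖ ≤ ‖z − q‖, and ‖z − q‖² ≤ ‖x − q‖² − D with D ≥ 0. Then (1 − β̄) D ≤ ‖x − u‖ (‖x − q‖ + ‖u − q‖). -/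
/-- The key inequality (3.11)/(4.11):
`(1 − β̄) D ≤ ‖x − u‖ (‖x − q‖ + ‖u − q‖)`. -/
theorem stmt_19 {H : Type*} [NormedAddCommGroup H] [InnerProductSpace ℝ H]
    (q x t z u Tx Tz : H)
    (α β βbar D : ℝ)
    (hα : α ∈ Set.Icc (0:ℝ) 1) (hβ : β ∈ Set.Icc (0:ℝ) βbar) (hβbar : βbar < 1)
    (hβbar0 : 0 ≤ βbar)
    (ht : t = α • x + (1 - α) • Tx)
    (hu : u = β • t + (1 - β) • Tz)
    (hTx : ‖Tx - q‖ ≤ ‖x - q‖)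
    (hTz : ‖Tz - q‖ ≤ ‖z - q‖)
    (hz : ‖z - q‖ ^ 2 ≤ ‖x - q‖ ^ 2 - D) (hD : 0 ≤ D) :
    (1 - βbar) * D ≤ ‖x - u‖ * (‖x - q‖ + ‖u - q‖) := by
  obtain ⟨hα0, hα1⟩ := hα
  obtain ⟨hβ0, hβb⟩ := hβ
  have hβ1 : β ≤ 1 := le_of_lt (lt_of_le_of_lt hβb hβbar)
  -- norm convexity for t
  have htq : ‖t - q‖ ≤ ‖x - q‖ := by
    have : t - q = α • (x - q) + (1 - α) • (Tx - q) := by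
      rw [ht]; module
    rw [this]
    calc ‖α • (x - q) + (1 - α) • (Tx - q)‖
        ≤ ‖α • (x - q)‖ + ‖(1 - α) • (Tx - q)‖ := norm_add_le _ _
      _ = α * ‖x - q‖ + (1 - α) * ‖Tx - q‖ := by
          rw [norm_smul, norm_smul, Real.norm_of_nonneg hα0,
            Real.norm_of_nonneg (by linarith)]
      _ ≤ ‖x - q‖ := by nlinarith [norm_nonneg (x - q)]
  have huq : ‖u - q‖ ≤ β * ‖t - q‖ + (1 - β) * ‖Tz - q‖ := by
    have : u - q = β • (t - q) + (1 - β) • (Tz - q) := by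
      rw [hu]; module
    rw [this]
    calc ‖β • (t - q) + (1 - β) • (Tz - q)‖
        ≤ ‖β • (t - q)‖ + ‖(1 - β) • (Tz - q)‖ := norm_add_le _ _
      _ = β * ‖t - q‖ + (1 - β) * ‖Tz - q‖ := by
          rw [norm_smul, norm_smul, Real.norm_of_nonneg hβ0,
            Real.norm_of_nonneg (by linarith)]
  -- squared bound
  have key : ‖u - q‖ ^ 2 ≤ ‖x - q‖ ^ 2 - (1 - β) * D := by
    have h1 : ‖u - q‖ ^ 2 ≤ (β * ‖t - q‖ + (1 - β) * ‖Tz - q‖) ^ 2 := by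
      apply pow_le_pow_left₀ (norm_nonneg _) huq
    have h2 : (β * ‖t - q‖ + (1 - β) * ‖Tz - q‖) ^ 2
        ≤ β * ‖t - q‖ ^ 2 + (1 - β) * ‖Tz - q‖ ^ 2 := by
      nlinarith [sq_nonneg (‖t - q‖ - ‖Tz - q‖), mul_nonneg hβ0 (sub_nonneg.2 hβ1)]
    have h3 : ‖t - q‖ ^ 2 ≤ ‖x - q‖ ^ 2 :=
      pow_le_pow_left₀ (norm_nonneg _) htq 2
    have h4 : ‖Tz - q‖ ^ 2 ≤ ‖x - q‖ ^ 2 - D := by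
      calc ‖Tz - q‖ ^ 2 ≤ ‖z - q‖ ^ 2 := pow_le_pow_left₀ (norm_nonneg _) hTz 2
        _ ≤ ‖x - q‖ ^ 2 - D := hz
    nlinarith [mul_nonneg hβ0 (sub_nonneg.2 hβ1)]
  -- difference of squares
  have habs : ‖x - q‖ - ‖u - q‖ ≤ ‖x - u‖ := by
    have := norm_sub_norm_le (x - q) (u - q)
    simpa [show x - q - (u - q) = x - u by abel] using this
  have hfinal : ‖x - q‖ ^ 2 - ‖u - q‖ ^ 2 ≤ ‖x - u‖ * (‖x - q‖ + ‖u - q‖) := by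
    nlinarith [norm_nonneg (x - q), norm_nonneg (u - q)]
  have : (1 - βbar) * D ≤ (1 - β) * D := by nlinarith
  linarith
end
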